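/- arXiv:2305.03988 — 4 statements merged into one kernel-verified Lean document; each statement's English description precedes it below -/
import Mathlib

section
/- Let d ≥ 2. There exists ε₀ ∈ (0,1] such that for every ε ∈ (0, ε₀) and every H¹(𝒢_ε^d)-function u: | ‖u‖²_{L²(𝒢_ε^d)} − ‖ũ‖²_{L²(𝒢_ε^d)} | ≤ 3 ε ( ‖u‖²_{L²(𝒢_ε^d)} + ‖u'‖²_{L²(𝒢_ε^d)} ), where ũ is the piecewise-linear interpolation of u. (This is Lemma 4.2.) -/
open MeasureTheory ENNReal

noncomputable section

/-- Points of `ℝ^d` (with the Euclidean metric). -/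
abbrev Pt (d : ℕ) := EuclideanSpace ℝ (Fin d)

/-- `X_ε^j`: the union of all lines parallel to the `j`-th coordinate axis through points
of `ε ℤ^d`. -/
def lineSet (d : ℕ) (ε : ℝ) (j : Fin d) : Set (Pt d) :=
  {x | ∀ i, i ≠ j → ∃ n : ℤ, x i = ε * n}

/-- The `d`-dimensional cubic grid `𝒢_ε^d` of edgelength `ε`. -/
def grid (d : ℕ) (ε : ℝ) : Set (Pt d) := ⋃ j : Fin d, lineSet d ε j

/-- Integral over the grid with respect to the 1-dimensional Hausdorff measure of `ℝ^d`,
as a value in `[0,∞]`. -/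
def gridInt (d : ℕ) (ε : ℝ) (f : Pt d → ℝ) : ℝ≥0∞ :=
  ∫⁻ x in grid d ε, ENNReal.ofReal (f x) ∂μH[1]

/-- `‖u‖²_{L²(𝒢_ε^d)}`, as a value in `[0,∞]`. -/
def gridL2sq (d : ℕ) (ε : ℝ) (u : Pt d → ℝ) : ℝ≥0∞ := gridInt d ε (fun x => (u x) ^ 2)

/-- `‖u‖_{L^q(𝒢_ε^d)}^q`, as a value in `[0,∞]`. -/
def gridLq (d : ℕ) (ε q : ℝ) (u : Pt d → ℝ) : ℝ≥0∞ := gridInt d ε (fun x => |u x| ^ q)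

/-- Update the `j`-th coordinate of a point of `ℝ^d`. -/
def upd {d : ℕ} (y : Pt d) (j : Fin d) (t : ℝ) : Pt d := WithLp.toLp 2 (Function.update y j t)

/-- `u` is an `H¹(𝒢_ε^d)`-function with edge derivative `g`: both are Borel, on every edge
of the grid `u` is absolutely continuous with derivative `g` (expressed via the fundamental
theorem of calculus with `g` locally integrable on edges), and `u, g ∈ L²(𝒢_ε^d)`. -/
structure IsGridH1 (d : ℕ) (ε : ℝ) (u g : Pt d → ℝ) : Prop where
  meas_u : Measurable u
  meas_g : Measurable g
  intInt : ∀ (j : Fin d) (y : Pt d), (∀ i, i ≠ j → ∃ m : ℤ, y i = ε * m) →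
    ∀ n : ℤ, IntervalIntegrable (fun t => g (upd y j t)) volume (ε * n) (ε * (n + 1))
  ftc : ∀ (j : Fin d) (y : Pt d), (∀ i, i ≠ j → ∃ m : ℤ, y i = ε * m) →
    ∀ n : ℤ, ∀ s ∈ Set.Icc (ε * n) (ε * (n + 1)), ∀ t ∈ Set.Icc (ε * n) (ε * (n + 1)),
      u (upd y j t) - u (upd y j s) = ∫ r in s..t, g (upd y j r)
  finL2u : gridL2sq d ε u ≠ ∞
  finL2g : gridL2sq d ε g ≠ ∞

/-- `u` is a `W^{1,1}(𝒢_1^d)`-function with edge derivative `g`. -/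
structure IsGridW11 (d : ℕ) (u g : Pt d → ℝ) : Prop where
  meas_u : Measurable u
  meas_g : Measurable g
  intInt : ∀ (j : Fin d) (y : Pt d), (∀ i, i ≠ j → ∃ m : ℤ, y i = (m : ℝ)) →
    ∀ n : ℤ, IntervalIntegrable (fun t => g (upd y j t)) volume (n : ℝ) ((n : ℝ) + 1)
  ftc : ∀ (j : Fin d) (y : Pt d), (∀ i, i ≠ j → ∃ m : ℤ, y i = (m : ℝ)) →
    ∀ n : ℤ, ∀ s ∈ Set.Icc (n : ℝ) ((n : ℝ) + 1), ∀ t ∈ Set.Icc (n : ℝ) ((n : ℝ) + 1),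
      u (upd y j t) - u (upd y j s) = ∫ r in s..t, g (upd y j r)
  finL1u : gridInt d 1 (fun x => |u x|) ≠ ∞
  finL1g : gridInt d 1 (fun x => |g x|) ≠ ∞

/-- The vertex `ε k ∈ ε ℤ^d` of the grid. -/
def vert (d : ℕ) (ε : ℝ) (k : Fin d → ℤ) : Pt d := WithLp.toLp 2 (fun i => ε * k i)

/-- `v` is the piecewise-linear interpolation `ũ` of `u`: on each edge of the grid it is the
linear interpolation of the values of `u` at the two endpoints. -/
def IsInterp (d : ℕ) (ε : ℝ) (u v : Pt d → ℝ) : Prop :=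
  ∀ (k : Fin d → ℤ) (j : Fin d) (t : ℝ), t ∈ Set.Icc (0:ℝ) 1 →
    v ((1 - t) • vert d ε k + t • vert d ε (fun i => if i = j then k i + 1 else k i)) =
      (1 - t) * u (vert d ε k) + t * u (vert d ε (fun i => if i = j then k i + 1 else k i))

/-- The simplex `S_{k,σ}` inside the cube `C_k`. -/
def simplexS (d : ℕ) (ε : ℝ) (k : Fin d → ℤ) (σ : Equiv.Perm (Fin d)) : Set (Pt d) :=
  {x | (∀ i, x i ∈ Set.Icc (ε * k i) (ε * (k i + 1))) ∧
    ∀ a b : Fin d, a ≤ b → x (σ a) - ε * k (σ a) ≤ x (σ b) - ε * k (σ b)}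

/-- `A` is the piecewise-affine extension `𝒜u` of `u`: it agrees with `u` on the vertex set
`ε ℤ^d` and is affine on each simplex `S_{k,σ}`. -/
def IsAffExt (d : ℕ) (ε : ℝ) (u A : Pt d → ℝ) : Prop :=
  (∀ k : Fin d → ℤ, A (vert d ε k) = u (vert d ε k)) ∧
  ∀ (k : Fin d → ℤ) (σ : Equiv.Perm (Fin d)), ∃ (L : Pt d →L[ℝ] ℝ) (c : ℝ),
    ∀ x ∈ simplexS d ε k σ, A x = L x + c

/-- The Gagliardo–Nirenberg quotient `Q_{q,𝒢_ε^d}(u)` (with edge derivative `g`),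
as a value in `[0,∞]`. -/
def Qgrid (d : ℕ) (ε q : ℝ) (u g : Pt d → ℝ) : ℝ≥0∞ :=
  gridLq d ε q u /
    ((gridL2sq d ε u) ^ (((d : ℝ) + (2 - (d : ℝ)) * (q / 2)) / 2) *
     (gridL2sq d ε g) ^ ((q / 2 - 1) * (d : ℝ) / 2))

/-- The sharp Gagliardo–Nirenberg constant `K_{q,𝒢_ε^d}`, a supremum in `[0,∞]`. -/
def Kgrid (d : ℕ) (ε q : ℝ) : ℝ≥0∞ :=
  ⨆ (u : Pt d → ℝ) (g : Pt d → ℝ) (_ : IsGridH1 d ε u g)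
    (_ : gridL2sq d ε u ≠ 0) (_ : gridL2sq d ε g ≠ 0), Qgrid d ε q u g

/-- The Gagliardo–Nirenberg quotient `Q_{q,ℝ^d}(v)`, as a value in `[0,∞]`. -/
def QReal (d : ℕ) (q : ℝ) (v : Pt d → ℝ) : ℝ≥0∞ :=
  (∫⁻ x, ENNReal.ofReal (|v x| ^ q)) /
    ((∫⁻ x, ENNReal.ofReal ((v x) ^ 2)) ^ (((d : ℝ) + (2 - (d : ℝ)) * (q / 2)) / 2) *
     (∫⁻ x, ENNReal.ofReal (‖fderiv ℝ v x‖ ^ 2)) ^ ((q / 2 - 1) * (d : ℝ) / 2))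

/-- `K^{Lip}_{q,ℝ^d}`: the supremum of the Gagliardo–Nirenberg quotient over nontrivial
locally Lipschitz functions on `ℝ^d` with finite norms. -/
def KLip (d : ℕ) (q : ℝ) : ℝ≥0∞ :=
  ⨆ (v : Pt d → ℝ) (_ : LocallyLipschitz v)
    (_ : (∫⁻ x, ENNReal.ofReal ((v x) ^ 2)) ≠ 0)
    (_ : (∫⁻ x, ENNReal.ofReal ((v x) ^ 2)) ≠ ∞)
    (_ : (∫⁻ x, ENNReal.ofReal (|v x| ^ q)) ≠ ∞)
    (_ : (∫⁻ x, ENNReal.ofReal (‖fderiv ℝ v x‖ ^ 2)) ≠ 0)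
    (_ : (∫⁻ x, ENNReal.ofReal (‖fderiv ℝ v x‖ ^ 2)) ≠ ∞), QReal d q v

/-- The modified action functional `J̃_{λ,𝒢_ε^d}` (of a function `u` with edge derivative `g`). -/
def Jact (d : ℕ) (ε lam p : ℝ) (u g : Pt d → ℝ) : ℝ :=
  (1 / 2) * (gridL2sq d ε g).toReal + lam / (2 * d) * (gridL2sq d ε u).toReal
    - 1 / ((d : ℝ) * p) * (gridLq d ε p u).toReal

/-- Membership in the Nehari manifold `Ñ_{λ,𝒢_ε^d}`. -/
def InNehari (d : ℕ) (ε lam p : ℝ) (u g : Pt d → ℝ) : Prop :=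
  IsGridH1 d ε u g ∧ gridL2sq d ε u ≠ 0 ∧ gridLq d ε p u ≠ ∞ ∧
    (d : ℝ) * (gridL2sq d ε g).toReal + lam * (gridL2sq d ε u).toReal = (gridLq d ε p u).toReal

/-- `u` (with edge derivative `g`) is an action ground state at frequency `lam`. -/
def IsActionGS (d : ℕ) (ε lam p : ℝ) (u g : Pt d → ℝ) : Prop :=
  InNehari d ε lam p u g ∧
    ∀ v h, InNehari d ε lam p v h → Jact d ε lam p u g ≤ Jact d ε lam p v h

/-- The modified energy functional `Ẽ_{𝒢_ε^d}` (of a function `u` with edge derivative `g`). -/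
def Egrid (d : ℕ) (ε p : ℝ) (u g : Pt d → ℝ) : ℝ :=
  (1 / 2) * (gridL2sq d ε g).toReal - 1 / ((d : ℝ) * p) * (gridLq d ε p u).toReal

/-- `u` (with edge derivative `g`) is an energy ground state at mass `m`. -/
def IsEnergyGS (d : ℕ) (ε p m : ℝ) (u g : Pt d → ℝ) : Prop :=
  IsGridH1 d ε u g ∧ (gridL2sq d ε u).toReal = m ∧ gridLq d ε p u ≠ ∞ ∧
    ∀ v h, IsGridH1 d ε v h → (gridL2sq d ε v).toReal = m → gridLq d ε p v ≠ ∞ →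
      Egrid d ε p u g ≤ Egrid d ε p v h

end

section AuxDecomp

open Set MeasureTheory

variable {d : ℕ} {ε : ℝ}

/-- The parametrization of the line through `vert d ε k` in direction `j`. -/
noncomputable def emap (d : ℕ) (ε : ℝ) (j : Fin d) (k : Fin d → ℤ) : ℝ → Pt d :=
  fun t => upd (vert d ε k) j t

lemma isometry_upd (y : Pt d) (j : Fin d) : Isometry (fun t : ℝ => upd y j t) := by
  refine Isometry.of_dist_eq fun s t => ?_
  rw [EuclideanSpace.dist_eq]
  have h : ∀ i : Fin d, dist (upd y j s i) (upd y j t i) ^ 2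
      = if i = j then dist s t ^ 2 else 0 := by
    intro i
    by_cases h : i = j
    · subst h; simp [upd]
    · simp [upd, Function.update_of_ne h, dist_self, if_neg h]
  rw [Finset.sum_congr rfl fun i _ => h i, Finset.sum_ite_eq' Finset.univ j fun _ => dist s t ^ 2]
  simp [Real.sqrt_sq dist_nonneg]

lemma isometry_emap (j : Fin d) (k : Fin d → ℤ) : Isometry (emap d ε j k) :=
  isometry_upd _ _

lemma emap_measurableEmbedding (j : Fin d) (k : Fin d → ℤ) :
    MeasurableEmbedding (emap d ε j k) :=
  (isometry_emap j k).isClosedEmbedding.measurableEmbedding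

lemma map_emap_volume (j : Fin d) (k : Fin d → ℤ) :
    Measure.map (emap d ε j k) volume = μH[1].restrict (Set.range (emap d ε j k)) := by
  rw [← MeasureTheory.hausdorffMeasure_real]
  exact (isometry_emap j k).map_hausdorffMeasure (Or.inl zero_le_one)

lemma lintegral_range_emap (j : Fin d) (k : Fin d → ℤ) (F : Pt d → ℝ≥0∞) :
    ∫⁻ x in Set.range (emap d ε j k), F x ∂μH[1] = ∫⁻ t, F (emap d ε j k t) := by
  rw [← map_emap_volume]
  exact (emap_measurableEmbedding j k).lintegral_map F

end AuxDecomp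
section AuxDecomp2

open Set MeasureTheory

variable {d : ℕ} {ε : ℝ}

lemma emap_apply (j : Fin d) (k : Fin d → ℤ) (t : ℝ) (i : Fin d) :
    emap d ε j k t i = if i = j then t else ε * k i := by
  by_cases h : i = j
  · subst h; simp [emap, upd]
  · simp [emap, upd, Function.update_of_ne h, if_neg h, vert]

lemma lineSet_eq (j : Fin d) :
    lineSet d ε j = ⋃ k : {k : Fin d → ℤ // k j = 0}, Set.range (emap d ε j k.1) := by
  ext x
  constructor
  · intro hx
    choose n hn using hx
    refine Set.mem_iUnion.2 ⟨⟨fun i => if h : i = j then 0 else n i h, by simp⟩, ⟨x j, ?_⟩⟩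
    ext i
    rw [emap_apply]
    by_cases h : i = j
    · subst h; simp
    · simp only [if_neg h]
      rw [dif_neg h, ← hn i h]
  · intro hx
    obtain ⟨k, t, rfl⟩ := Set.mem_iUnion.1 hx
    intro i hi
    exact ⟨k.1 i, by rw [emap_apply, if_neg hi]⟩

lemma pairwise_disjoint_ranges (hε : ε ≠ 0) (j : Fin d) :
    Pairwise (Function.onFun Disjoint
      fun k : {k : Fin d → ℤ // k j = 0} => Set.range (emap d ε j k.1)) := by
  intro k k' hkk'
  rw [Function.onFun, Set.disjoint_left]
  rintro x ⟨t, rfl⟩ ⟨t', hx⟩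
  apply hkk'
  ext i
  by_cases h : i = j
  · subst h; rw [k.2, k'.2]
  · have : emap d ε j k' t' i = emap d ε j k t i := by rw [hx]
    rw [emap_apply, emap_apply, if_neg h, if_neg h] at this
    exact_mod_cast mul_left_cancel₀ hε this.symm

lemma lintegral_lineSet (hε : ε ≠ 0) (j : Fin d) (F : Pt d → ℝ≥0∞) :
    ∫⁻ x in lineSet d ε j, F x ∂μH[1]
      = ∑' k : {k : Fin d → ℤ // k j = 0}, ∫⁻ t, F (emap d ε j k.1 t) := by
  rw [lineSet_eq j, lintegral_iUnion (s := fun k : {k : Fin d → ℤ // k j = 0} => Set.range (emap d ε j k.1)) (fun k => (emap_measurableEmbedding j k.1).measurableSet_range)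
    (pairwise_disjoint_ranges hε j)]
  exact tsum_congr fun k => lintegral_range_emap j k.1 F

lemma iUnion_Ico_eq_univ (hε : 0 < ε) : (⋃ n : ℤ, Set.Ico (ε * n) (ε * (n + 1))) = Set.univ := by
  ext t
  simp only [Set.mem_iUnion, Set.mem_Ico, Set.mem_univ, iff_true]
  refine ⟨⌊t / ε⌋, ?_, ?_⟩
  · calc ε * ⌊t / ε⌋ ≤ ε * (t / ε) := by
          exact mul_le_mul_of_nonneg_left (Int.floor_le _) hε.le
      _ = t := by field_simp
  · calc t = ε * (t / ε) := by field_simp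
      _ < ε * (⌊t / ε⌋ + 1) := by
          exact mul_lt_mul_of_pos_left (Int.lt_floor_add_one _) hε

lemma pairwise_disjoint_Icos (hε : 0 < ε) :
    Pairwise (Function.onFun Disjoint fun n : ℤ => Set.Ico (ε * n) (ε * (n + 1))) := by
  intro m n hmn
  rw [Function.onFun, Set.Ico_disjoint_Ico]
  rcases lt_or_gt_of_ne hmn with h | h
  · have hm : (m : ℝ) + 1 ≤ n := by exact_mod_cast h
    refine le_trans (min_le_left _ _) (le_trans ?_ (le_max_right _ _))
    exact mul_le_mul_of_nonneg_left hm hε.le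
  · have hm : (n : ℝ) + 1 ≤ m := by exact_mod_cast h
    refine le_trans (min_le_right _ _) (le_trans ?_ (le_max_left _ _))
    exact mul_le_mul_of_nonneg_left hm hε.le

lemma lintegral_line_split (hε : 0 < ε) (G : ℝ → ℝ≥0∞) :
    ∫⁻ t, G t = ∑' n : ℤ, ∫⁻ t in Set.Ico (ε * n) (ε * (n + 1)), G t := by
  rw [← setLIntegral_univ (μ := volume), ← iUnion_Ico_eq_univ hε,
    lintegral_iUnion (fun _ => measurableSet_Ico) (pairwise_disjoint_Icos hε)]

lemma countable_vertexSet (hε : ε ≠ 0) :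
    ({x : Pt d | ∀ i, ∃ n : ℤ, x i = ε * n}).Countable := by
  have : {x : Pt d | ∀ i, ∃ n : ℤ, x i = ε * n} ⊆ Set.range (vert d ε) := by
    intro x hx
    choose n hn using hx
    exact ⟨n, by ext i; exact (hn i).symm⟩
  exact (Set.countable_range _).mono this

lemma aedisjoint_lineSets (hε : ε ≠ 0) :
    Pairwise (Function.onFun (MeasureTheory.AEDisjoint (μH[1] : Measure (Pt d))) fun j => lineSet d ε j) := by
  intro j j' hjj'
  haveI : NullSingletonClass (μH[1] : Measure (Pt d)) := MeasureTheory.Measure.noAtoms_hausdorff (Pt d) one_pos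
  refine measure_mono_null ?_ ((countable_vertexSet hε).measure_zero _)
  rintro x ⟨hx1, hx2⟩
  intro i
  by_cases h : i = j
  · exact hx2 i (h ▸ hjj')
  · exact hx1 i h

lemma gridInt_eq_tsum (hε : 0 < ε) (f : Pt d → ℝ) :
    gridInt d ε f = ∑' (j : Fin d) (k : {k : Fin d → ℤ // k j = 0}) (n : ℤ),
      ∫⁻ t in Set.Ico (ε * n) (ε * (n + 1)), ENNReal.ofReal (f (emap d ε j k.1 t)) := by
  rw [gridInt, grid, lintegral_iUnion₀
    (fun j => ((lineSet_eq j ▸ MeasurableSet.iUnion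
      (fun k => (emap_measurableEmbedding j k.1).measurableSet_range)) :
        MeasurableSet (lineSet d ε j)).nullMeasurableSet)
    (aedisjoint_lineSets hε.ne')]
  refine tsum_congr fun j => ?_
  rw [lintegral_lineSet hε.ne' j]
  refine tsum_congr fun k => ?_
  exact lintegral_line_split hε _

end AuxDecomp2
section AuxEdge

open Set MeasureTheory

/-- Pointwise square comparison. -/
lemma sq_est {ε M x y : ℝ} (hε : 0 < ε) (hM : |x - y| ≤ M) :
    x ^ 2 ≤ (1 + ε) * y ^ 2 + (1 + 1 / ε) * M ^ 2 := by
  have hM0 : 0 ≤ M := le_trans (abs_nonneg _) hM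
  have h1 : (x - y) ^ 2 ≤ M ^ 2 := sq_le_sq' (abs_le.1 hM).1 (abs_le.1 hM).2
  have key : ε * ((1 + ε) * y ^ 2 + (1 + 1 / ε) * M ^ 2 - x ^ 2)
      = (ε * y - (x - y)) ^ 2 + (M ^ 2 - (x - y) ^ 2) * (ε + 1) := by
    field_simp
    ring
  have h2 : 0 ≤ ε * ((1 + ε) * y ^ 2 + (1 + 1 / ε) * M ^ 2 - x ^ 2) := by
    rw [key]
    nlinarith [sq_nonneg (ε * y - (x - y))]
  nlinarith [h2, hε]

/-- The Cauchy–Schwarz-type bound `M² ≤ ε S` from `M ≤ S/(2c) + cε/2` for all `c > 0`. -/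
lemma M_sq_le {ε M S : ℝ} (hε : 0 < ε) (hM0 : 0 ≤ M) (hS0 : 0 ≤ S)
    (hb : ∀ c : ℝ, 0 < c → M ≤ S / (2 * c) + c / 2 * ε) : M ^ 2 ≤ ε * S := by
  rcases eq_or_lt_of_le hS0 with hS | hS
  · have hM : M = 0 := by
      by_contra hMne
      have hMpos : 0 < M := lt_of_le_of_ne hM0 (Ne.symm hMne)
      have hc := hb (M / ε) (by positivity)
      rw [← hS] at hc
      have h2 : 0 / (2 * (M / ε)) + M / ε / 2 * ε = M / 2 := by
        rw [zero_div, zero_add]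
        field_simp
      rw [h2] at hc
      linarith
    rw [hM, ← hS]; norm_num
  · set c := Real.sqrt (S / ε) with hc
    have hcpos : 0 < c := Real.sqrt_pos.2 (by positivity)
    have hc2 : c ^ 2 = S / ε := Real.sq_sqrt (by positivity)
    have hSc : S = c ^ 2 * ε := by rw [hc2]; field_simp
    have hMc := hb c hcpos
    have hMle : M ≤ c * ε := by
      rw [hSc] at hMc
      have : c ^ 2 * ε / (2 * c) = c * ε / 2 := by
        field_simp
      rw [this] at hMc
      linarith
    calc M ^ 2 ≤ (c * ε) ^ 2 := by nlinarith
      _ = ε * S := by rw [hSc]; ring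

end AuxEdge
section AuxEdge2

open Set MeasureTheory

lemma lin_est {a b ε M : ℝ} (hε : 0 < ε) (hM0 : 0 ≤ M)
    {f g : ℝ → ℝ} (hg : Measurable g)
    (hfg : ∀ t ∈ Set.Icc a b, |f t - g t| ≤ M) :
    ∫⁻ t in Set.Ico a b, ENNReal.ofReal (f t ^ 2)
      ≤ ENNReal.ofReal (1 + ε) * (∫⁻ t in Set.Ico a b, ENNReal.ofReal (g t ^ 2))
        + ENNReal.ofReal ((1 + 1 / ε) * M ^ 2) * volume (Set.Ico a b) := by
  have step : ∫⁻ t in Set.Ico a b, ENNReal.ofReal (f t ^ 2)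
      ≤ ∫⁻ t in Set.Ico a b,
        (ENNReal.ofReal (1 + ε) * ENNReal.ofReal (g t ^ 2)
          + ENNReal.ofReal ((1 + 1 / ε) * M ^ 2)) := by
    refine setLIntegral_mono
      ((((hg.pow_const 2).ennreal_ofReal).const_mul _).add_const _) fun t ht => ?_
    have h1 : f t ^ 2 ≤ (1 + ε) * g t ^ 2 + (1 + 1 / ε) * M ^ 2 :=
      sq_est hε (hfg t (Set.Ico_subset_Icc_self ht))
    calc ENNReal.ofReal (f t ^ 2)
        ≤ ENNReal.ofReal ((1 + ε) * g t ^ 2 + (1 + 1 / ε) * M ^ 2) :=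
          ENNReal.ofReal_le_ofReal h1
      _ = _ := by
          rw [ENNReal.ofReal_add (by positivity) (by positivity),
            ENNReal.ofReal_mul (by positivity)]
  refine le_trans step (le_of_eq ?_)
  rw [lintegral_add_right _ measurable_const,
    lintegral_const_mul _ ((hg.pow_const 2).ennreal_ofReal), setLIntegral_const]

lemma edge_est {ε a : ℝ} (hε : 0 < ε) (hε2 : ε ≤ 2 / 3) {w h l : ℝ → ℝ}
    (hw : Measurable w)
    (hint : IntervalIntegrable h volume a (a + ε))
    (ftc : ∀ s ∈ Set.Icc a (a + ε), ∀ t ∈ Set.Icc a (a + ε), w t - w s = ∫ r in s..t, h r)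
    (hl : ∀ t ∈ Set.Icc a (a + ε),
      l t = (1 - (t - a) / ε) * w a + (t - a) / ε * w (a + ε)) :
    ((∫⁻ t in Set.Ico a (a + ε), ENNReal.ofReal (w t ^ 2)) ≤
        (∫⁻ t in Set.Ico a (a + ε), ENNReal.ofReal (l t ^ 2))
          + ENNReal.ofReal (3 * ε) * ((∫⁻ t in Set.Ico a (a + ε), ENNReal.ofReal (w t ^ 2))
            + (∫⁻ t in Set.Ico a (a + ε), ENNReal.ofReal (h t ^ 2)))) ∧
      (∫⁻ t in Set.Ico a (a + ε), ENNReal.ofReal (l t ^ 2)) ≤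
        (∫⁻ t in Set.Ico a (a + ε), ENNReal.ofReal (w t ^ 2))
          + ENNReal.ofReal (3 * ε) * ((∫⁻ t in Set.Ico a (a + ε), ENNReal.ofReal (w t ^ 2))
            + (∫⁻ t in Set.Ico a (a + ε), ENNReal.ofReal (h t ^ 2))) := by
  set b := a + ε with hb
  have hab : a ≤ b := le_add_of_nonneg_right hε.le
  set W := ∫⁻ t in Set.Ico a b, ENNReal.ofReal (w t ^ 2) with hW
  set L := ∫⁻ t in Set.Ico a b, ENNReal.ofReal (l t ^ 2) with hL
  set H := ∫⁻ t in Set.Ico a b, ENNReal.ofReal (h t ^ 2) with hH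
  have h3ne : ENNReal.ofReal (3 * ε) ≠ 0 := by
    rw [Ne, ENNReal.ofReal_eq_zero]; intro hcon; linarith
  by_cases hHtop : H = ⊤
  · constructor <;>
    · rw [hHtop]
      rw [add_top, ENNReal.mul_top h3ne, add_top]
      exact le_top
  -- main case
  have hi : IntegrableOn h (Set.Ioc a b) volume := hint.1
  set M := ∫ r in Set.Ioc a b, |h r| with hM
  have hM0 : 0 ≤ M := integral_nonneg fun r => abs_nonneg _
  have hiabs : IntegrableOn (fun r => |h r|) (Set.Ioc a b) volume := hi.abs
  have key1 : ∀ s ∈ Set.Icc a b, ∀ t ∈ Set.Icc a b, |w t - w s| ≤ M := by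
    intro s hs t ht
    rw [ftc s hs t ht]
    have h1 := intervalIntegral.norm_integral_le_integral_norm_uIoc
      (a := s) (b := t) (f := h) (μ := volume)
    simp only [Real.norm_eq_abs] at h1
    refine le_trans h1 ?_
    refine setIntegral_mono_set hiabs (ae_of_all _ fun r => abs_nonneg _)
      (HasSubset.Subset.eventuallyLE ?_)
    rw [Set.uIoc]
    exact Set.Ioc_subset_Ioc (le_min hs.1 ht.1) (max_le hs.2 ht.2)
  set l0 : ℝ → ℝ := fun t => (1 - (t - a) / ε) * w a + (t - a) / ε * w b with hl0def
  have hl0meas : Measurable l0 := by fun_prop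
  have key2 : ∀ t ∈ Set.Icc a b, |l0 t - w t| ≤ M := by
    intro t ht
    set τ := (t - a) / ε with hτ
    have hτ0 : 0 ≤ τ := div_nonneg (sub_nonneg.2 ht.1) hε.le
    have hτ1 : τ ≤ 1 := by
      rw [hτ, div_le_one hε]
      have := ht.2
      rw [hb] at this
      linarith
    have e1 : l0 t - w t = (1 - τ) * (w a - w t) + τ * (w b - w t) := by
      simp only [hl0def]
      ring
    have b1 : |w a - w t| ≤ M := by
      rw [abs_sub_comm]; exact key1 a ⟨le_refl a, hab⟩ t ht
    have b2 : |w b - w t| ≤ M := by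
      rw [abs_sub_comm]; exact key1 b ⟨hab, le_refl b⟩ t ht
    rw [e1]
    calc |(1 - τ) * (w a - w t) + τ * (w b - w t)|
        ≤ |(1 - τ) * (w a - w t)| + |τ * (w b - w t)| := abs_add_le _ _
      _ = (1 - τ) * |w a - w t| + τ * |w b - w t| := by
          rw [abs_mul, abs_mul, abs_of_nonneg (by linarith), abs_of_nonneg hτ0]
      _ ≤ (1 - τ) * M + τ * M := by
          exact add_le_add (mul_le_mul_of_nonneg_left b1 (by linarith))
            (mul_le_mul_of_nonneg_left b2 hτ0)
      _ = M := by ring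
  have hIcoIoc : (volume : Measure ℝ).restrict (Set.Ico a b)
      = volume.restrict (Set.Ioc a b) := Measure.restrict_congr_set Ico_ae_eq_Ioc
  have hH' : H = ∫⁻ t in Set.Ioc a b, ENNReal.ofReal (h t ^ 2) := by rw [hH, hIcoIoc]
  have hsm : AEStronglyMeasurable (fun t => h t ^ 2) (volume.restrict (Set.Ioc a b)) := by
    have he : (fun t => h t ^ 2) = fun t => h t * h t := by funext t; ring
    rw [he]
    exact hi.aestronglyMeasurable.mul hi.aestronglyMeasurable
  have hint2 : IntegrableOn (fun t => h t ^ 2) (Set.Ioc a b) volume := by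
    refine ⟨hsm, ?_⟩
    rw [hasFiniteIntegral_iff_ofReal (ae_of_all _ fun t => sq_nonneg _), ← hH']
    exact lt_top_iff_ne_top.2 hHtop
  set S := ∫ t in Set.Ioc a b, h t ^ 2 with hS
  have hS0 : 0 ≤ S := integral_nonneg fun t => sq_nonneg _
  have hHS : H = ENNReal.ofReal S := by
    rw [hH', ← ofReal_integral_eq_lintegral_ofReal hint2 (ae_of_all _ fun t => sq_nonneg _)]
  have hvol : volume (Set.Ioc a b) = ENNReal.ofReal ε := by
    rw [Real.volume_Ioc, hb, add_sub_cancel_left]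
  have hvol' : volume (Set.Ico a b) = ENNReal.ofReal ε := by
    rw [Real.volume_Ico, hb, add_sub_cancel_left]
  have keyM : M ^ 2 ≤ ε * S := by
    refine M_sq_le hε hM0 hS0 fun c hc => ?_
    have h2c : (0:ℝ) < 2 * c := by linarith
    have pw : ∀ r, |h r| ≤ h r ^ 2 / (2 * c) + c / 2 := by
      intro r
      have hcomb : h r ^ 2 / (2 * c) + c / 2 = (h r ^ 2 + c ^ 2) / (2 * c) := by
        field_simp
      rw [hcomb, le_div_iff₀ h2c]
      nlinarith [sq_nonneg (|h r| - c), sq_abs (h r)]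
    have hconst : IntegrableOn (fun _ : ℝ => c / 2) (Set.Ioc a b) volume := by
      refine integrableOn_const ?_
      rw [hvol]; exact ENNReal.ofReal_ne_top
    calc M ≤ ∫ r in Set.Ioc a b, (h r ^ 2 / (2 * c) + c / 2) := by
          exact integral_mono hiabs ((hint2.div_const _).add hconst) pw
      _ = S / (2 * c) + c / 2 * ε := by
          rw [integral_add (hint2.div_const _) hconst, integral_div, integral_const]
          rw [measureReal_restrict_apply_univ, measureReal_def, hvol, ENNReal.toReal_ofReal hε.le, smul_eq_mul]
          ring
  have hLL0 : L = ∫⁻ t in Set.Ico a b, ENNReal.ofReal (l0 t ^ 2) := by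
    rw [hL]
    refine lintegral_congr_ae ((ae_restrict_iff' measurableSet_Ico).2
      (ae_of_all _ fun t ht => ?_))
    show ENNReal.ofReal (l t ^ 2) = ENNReal.ofReal (l0 t ^ 2)
    rw [hl t (Set.Ico_subset_Icc_self ht)]
  have B1 : L ≤ ENNReal.ofReal (1 + ε) * W
      + ENNReal.ofReal ((1 + 1 / ε) * M ^ 2) * ENNReal.ofReal ε := by
    rw [hLL0, hW, ← hvol']
    exact lin_est hε hM0 hw key2
  have B2 : W ≤ ENNReal.ofReal (1 + ε) * L
      + ENNReal.ofReal ((1 + 1 / ε) * M ^ 2) * ENNReal.ofReal ε := by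
    rw [hW, hLL0, ← hvol']
    exact lin_est hε hM0 hl0meas fun t ht => by rw [abs_sub_comm]; exact key2 t ht
  have hC : ENNReal.ofReal ((1 + 1 / ε) * M ^ 2) * ENNReal.ofReal ε
      ≤ ENNReal.ofReal ((1 + ε) * ε) * H := by
    rw [← ENNReal.ofReal_mul (by positivity), hHS, ← ENNReal.ofReal_mul (by positivity)]
    refine ENNReal.ofReal_le_ofReal ?_
    have h1 : (1 + 1 / ε) * M ^ 2 * ε ≤ (1 + 1 / ε) * (ε * S) * ε := by
      exact mul_le_mul_of_nonneg_right (mul_le_mul_of_nonneg_left keyM (by positivity)) hε.le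
    refine le_trans h1 (le_of_eq ?_)
    field_simp
    ring
  have hsplit : ∀ X : ℝ≥0∞, ENNReal.ofReal (1 + ε) * X = X + ENNReal.ofReal ε * X := by
    intro X
    rw [ENNReal.ofReal_add zero_le_one hε.le, ENNReal.ofReal_one, add_mul, one_mul]
  have hsqe : ε ^ 2 ≤ (2 / 3) * ε := by nlinarith
  have hce : ENNReal.ofReal ε ≤ ENNReal.ofReal (3 * ε) :=
    ENNReal.ofReal_le_ofReal (by linarith)
  have hce2 : ENNReal.ofReal ((1 + ε) * ε) ≤ ENNReal.ofReal (3 * ε) :=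
    ENNReal.ofReal_le_ofReal (by nlinarith)
  constructor
  · -- W ≤ L + 3ε (W + H)
    have step1 : W ≤ L + ENNReal.ofReal ε * L + ENNReal.ofReal ((1 + ε) * ε) * H := by
      calc W ≤ ENNReal.ofReal (1 + ε) * L
            + ENNReal.ofReal ((1 + 1 / ε) * M ^ 2) * ENNReal.ofReal ε := B2
        _ ≤ ENNReal.ofReal (1 + ε) * L + ENNReal.ofReal ((1 + ε) * ε) * H :=
            add_le_add_right hC _
        _ = L + ENNReal.ofReal ε * L + ENNReal.ofReal ((1 + ε) * ε) * H := by
            rw [hsplit]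
    have step2 : ENNReal.ofReal ε * L
        ≤ ENNReal.ofReal (ε * (1 + ε)) * W + ENNReal.ofReal (ε * ((1 + ε) * ε)) * H := by
      calc ENNReal.ofReal ε * L
          ≤ ENNReal.ofReal ε * (ENNReal.ofReal (1 + ε) * W
            + ENNReal.ofReal ((1 + ε) * ε) * H) := by
            exact mul_le_mul_right (le_trans B1 (add_le_add_right hC _)) _
        _ = ENNReal.ofReal (ε * (1 + ε)) * W + ENNReal.ofReal (ε * ((1 + ε) * ε)) * H := by
            rw [mul_add, ← mul_assoc, ← mul_assoc,
              ← ENNReal.ofReal_mul hε.le, ← ENNReal.ofReal_mul hε.le]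
    have hcW : ENNReal.ofReal (ε * (1 + ε)) ≤ ENNReal.ofReal (3 * ε) :=
      ENNReal.ofReal_le_ofReal (by nlinarith)
    have hcH : ENNReal.ofReal (ε * ((1 + ε) * ε)) + ENNReal.ofReal ((1 + ε) * ε)
        ≤ ENNReal.ofReal (3 * ε) := by
      rw [← ENNReal.ofReal_add (by positivity) (by positivity)]
      refine ENNReal.ofReal_le_ofReal ?_
      nlinarith [mul_le_mul_of_nonneg_left hsqe hε.le, hsqe]
    calc W ≤ L + ENNReal.ofReal ε * L + ENNReal.ofReal ((1 + ε) * ε) * H := step1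
      _ ≤ L + (ENNReal.ofReal (ε * (1 + ε)) * W + ENNReal.ofReal (ε * ((1 + ε) * ε)) * H)
          + ENNReal.ofReal ((1 + ε) * ε) * H := by
          exact add_le_add_left (add_le_add_right step2 _) _
      _ = L + ENNReal.ofReal (ε * (1 + ε)) * W
          + (ENNReal.ofReal (ε * ((1 + ε) * ε)) + ENNReal.ofReal ((1 + ε) * ε)) * H := by
          rw [add_mul]; ring
      _ ≤ L + ENNReal.ofReal (3 * ε) * W + ENNReal.ofReal (3 * ε) * H := by
          refine add_le_add (add_le_add_right (mul_le_mul_left hcW _) _)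
            (mul_le_mul_left hcH _)
      _ = L + ENNReal.ofReal (3 * ε) * (W + H) := by rw [mul_add, add_assoc]
  · -- L ≤ W + 3ε (W + H)
    calc L ≤ ENNReal.ofReal (1 + ε) * W
          + ENNReal.ofReal ((1 + 1 / ε) * M ^ 2) * ENNReal.ofReal ε := B1
      _ ≤ ENNReal.ofReal (1 + ε) * W + ENNReal.ofReal ((1 + ε) * ε) * H :=
          add_le_add_right hC _
      _ = W + ENNReal.ofReal ε * W + ENNReal.ofReal ((1 + ε) * ε) * H := by rw [hsplit]
      _ ≤ W + ENNReal.ofReal (3 * ε) * W + ENNReal.ofReal (3 * ε) * H := by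
          exact add_le_add (add_le_add_right (mul_le_mul_left hce _) _)
            (mul_le_mul_left hce2 _)
      _ = W + ENNReal.ofReal (3 * ε) * (W + H) := by rw [mul_add, add_assoc]

end AuxEdge2
section AuxGlue

open Set MeasureTheory

variable {d : ℕ} {ε : ℝ}

lemma interp_on_edge (hε : 0 < ε) {u v : Pt d → ℝ}
    (HI : IsInterp d ε u v) (j : Fin d) (k : Fin d → ℤ) (n : ℤ) :
    ∀ t ∈ Set.Icc (ε * n) (ε * n + ε),
      v (emap d ε j k t) = (1 - (t - ε * n) / ε) * u (emap d ε j k (ε * n))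
        + (t - ε * n) / ε * u (emap d ε j k (ε * n + ε)) := by
  intro t ht
  set τ := (t - ε * n) / ε with hτ
  have hτmem : τ ∈ Set.Icc (0 : ℝ) 1 := by
    constructor
    · exact div_nonneg (by linarith [ht.1]) hε.le
    · rw [hτ, div_le_one hε]; linarith [ht.2]
  have h0 := HI (Function.update k j n) j τ hτmem
  have hv1 : vert d ε (Function.update k j n) = emap d ε j k (ε * n) := by
    ext i
    rw [emap_apply]
    by_cases hij : i = j
    · subst hij
      rw [if_pos rfl]
      show ε * ((Function.update k i n i : ℤ) : ℝ) = ε * n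
      rw [Function.update_self]
    · rw [if_neg hij]
      show ε * ((Function.update k j n i : ℤ) : ℝ) = ε * k i
      rw [Function.update_of_ne hij]
  have hv2 : vert d ε (fun i => if i = j then Function.update k j n i + 1
      else Function.update k j n i) = emap d ε j k (ε * n + ε) := by
    ext i
    rw [emap_apply]
    by_cases hij : i = j
    · subst hij
      rw [if_pos rfl]
      show ε * (((if i = i then Function.update k i n i + 1 else Function.update k i n i) : ℤ) : ℝ)
        = ε * n + ε
      rw [if_pos rfl, Function.update_self]
      push_cast
      ring
    · rw [if_neg hij]
      show ε * (((if i = j then Function.update k j n i + 1 else Function.update k j n i) : ℤ) : ℝ)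
        = ε * k i
      rw [if_neg hij, Function.update_of_ne hij]
  have hv3 : (1 - τ) • vert d ε (Function.update k j n)
      + τ • vert d ε (fun i => if i = j then Function.update k j n i + 1
        else Function.update k j n i) = emap d ε j k t := by
    ext i
    have hadd : ((1 - τ) • vert d ε (Function.update k j n)
        + τ • vert d ε (fun i => if i = j then Function.update k j n i + 1
          else Function.update k j n i)) i
        = (1 - τ) * (vert d ε (Function.update k j n) i)
          + τ * (vert d ε (fun i => if i = j then Function.update k j n i + 1
            else Function.update k j n i) i) := rfl
    rw [hadd, emap_apply]
    by_cases hij : i = j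
    · subst hij
      rw [if_pos rfl]
      show (1 - τ) * (ε * ((Function.update k i n i : ℤ) : ℝ))
        + τ * (ε * (((if i = i then Function.update k i n i + 1
          else Function.update k i n i) : ℤ) : ℝ)) = t
      rw [if_pos rfl, Function.update_self]
      push_cast
      have : τ * ε = t - ε * n := by
        rw [hτ, div_mul_cancel₀]
        exact hε.ne'
      nlinarith [this]
    · rw [if_neg hij]
      show (1 - τ) * (ε * ((Function.update k j n i : ℤ) : ℝ))
        + τ * (ε * (((if i = j then Function.update k j n i + 1
          else Function.update k j n i) : ℤ) : ℝ)) = ε * k i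
      rw [if_neg hij, Function.update_of_ne hij]
      ring
  rw [hv3, hv1, hv2] at h0
  exact h0

lemma tsum_step {ι : Type*} (A B C D : ι → ℝ≥0∞) (c : ℝ≥0∞)
    (h : ∀ i, A i ≤ B i + c * (C i + D i)) :
    ∑' i, A i ≤ (∑' i, B i) + c * ((∑' i, C i) + (∑' i, D i)) := by
  calc ∑' i, A i ≤ ∑' i, (B i + c * (C i + D i)) := ENNReal.tsum_le_tsum h
    _ = (∑' i, B i) + c * ((∑' i, C i) + (∑' i, D i)) := by
        rw [ENNReal.tsum_add, ENNReal.tsum_mul_left, ENNReal.tsum_add]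

end AuxGlue

/-- Lemma 4.2. The absolute-value inequality
`|‖u‖² − ‖ũ‖²| ≤ 3ε(‖u‖² + ‖u'‖²)` is expressed by the two one-sided inequalities
in `[0,∞]` (which in particular force `‖ũ‖²` to be finite). -/
theorem stmt_2 (d : ℕ) (hd : 2 ≤ d) :
    ∃ ε₀ : ℝ, 0 < ε₀ ∧ ε₀ ≤ 1 ∧ ∀ ε : ℝ, 0 < ε → ε < ε₀ →
      ∀ u g v : Pt d → ℝ, IsGridH1 d ε u g → IsInterp d ε u v →
        gridL2sq d ε u ≤ gridL2sq d ε v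
            + ENNReal.ofReal (3 * ε) * (gridL2sq d ε u + gridL2sq d ε g) ∧
        gridL2sq d ε v ≤ gridL2sq d ε u
            + ENNReal.ofReal (3 * ε) * (gridL2sq d ε u + gridL2sq d ε g) := by
  refine ⟨2/3, by norm_num, by norm_num, fun ε hε hε23 u g v H1 HI => ?_⟩
  have key : ∀ (j : Fin d) (k : {k : Fin d → ℤ // k j = 0}) (n : ℤ),
      ((∫⁻ t in Set.Ico (ε * n) (ε * (n + 1)),
          ENNReal.ofReal ((fun x => u x ^ 2) (emap d ε j k.1 t))) ≤
        (∫⁻ t in Set.Ico (ε * n) (ε * (n + 1)),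
          ENNReal.ofReal ((fun x => v x ^ 2) (emap d ε j k.1 t)))
          + ENNReal.ofReal (3 * ε)
            * ((∫⁻ t in Set.Ico (ε * n) (ε * (n + 1)),
                ENNReal.ofReal ((fun x => u x ^ 2) (emap d ε j k.1 t)))
              + (∫⁻ t in Set.Ico (ε * n) (ε * (n + 1)),
                ENNReal.ofReal ((fun x => g x ^ 2) (emap d ε j k.1 t))))) ∧
      (∫⁻ t in Set.Ico (ε * n) (ε * (n + 1)),
          ENNReal.ofReal ((fun x => v x ^ 2) (emap d ε j k.1 t))) ≤
        (∫⁻ t in Set.Ico (ε * n) (ε * (n + 1)),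
          ENNReal.ofReal ((fun x => u x ^ 2) (emap d ε j k.1 t)))
          + ENNReal.ofReal (3 * ε)
            * ((∫⁻ t in Set.Ico (ε * n) (ε * (n + 1)),
                ENNReal.ofReal ((fun x => u x ^ 2) (emap d ε j k.1 t)))
              + (∫⁻ t in Set.Ico (ε * n) (ε * (n + 1)),
                ENNReal.ofReal ((fun x => g x ^ 2) (emap d ε j k.1 t)))) := by
    intro j k n
    have hra : ε * ((n : ℝ) + 1) = ε * (n : ℝ) + ε := by ring
    rw [hra]
    have hyk : ∀ i, i ≠ j → ∃ m : ℤ, (vert d ε k.1) i = ε * m := fun i _ => ⟨k.1 i, rfl⟩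
    have hint := H1.intInt j (vert d ε k.1) hyk n
    have ftc := H1.ftc j (vert d ε k.1) hyk n
    rw [hra] at hint ftc
    have hw : Measurable fun t => u (emap d ε j k.1 t) :=
      H1.meas_u.comp (isometry_emap j k.1).continuous.measurable
    have res := edge_est (w := fun t => u (emap d ε j k.1 t))
      (h := fun t => g (emap d ε j k.1 t)) (l := fun t => v (emap d ε j k.1 t))
      hε (le_of_lt hε23) hw hint ftc (interp_on_edge hε HI j k.1 n)
    exact res
  have hu := gridInt_eq_tsum (d := d) hε (fun x => u x ^ 2)
  have hv := gridInt_eq_tsum (d := d) hε (fun x => v x ^ 2)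
  have hg := gridInt_eq_tsum (d := d) hε (fun x => g x ^ 2)
  constructor
  · show gridInt d ε (fun x => u x ^ 2) ≤ gridInt d ε (fun x => v x ^ 2)
      + ENNReal.ofReal (3 * ε)
        * (gridInt d ε (fun x => u x ^ 2) + gridInt d ε (fun x => g x ^ 2))
    rw [hu, hv, hg]
    refine tsum_step _ _ _ _ _ fun j => ?_
    refine tsum_step _ _ _ _ _ fun k => ?_
    refine tsum_step _ _ _ _ _ fun n => ?_
    exact (key j k n).1
  · show gridInt d ε (fun x => v x ^ 2) ≤ gridInt d ε (fun x => u x ^ 2)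
      + ENNReal.ofReal (3 * ε)
        * (gridInt d ε (fun x => u x ^ 2) + gridInt d ε (fun x => g x ^ 2))
    rw [hu, hv, hg]
    refine tsum_step _ _ _ _ _ fun j => ?_
    refine tsum_step _ _ _ _ _ fun k => ?_
    refine tsum_step _ _ _ _ _ fun n => ?_
    exact (key j k n).2
end

section
/- Let d ≥ 2. There exists ε₀ > 0 such that for every ε ∈ (0, ε₀) and every H¹(𝒢_ε^d)-function u: ∫_{ℝ^d} (𝒜u)² dx ≤ 2^d (d+1) ε^{d−1} ( ‖u‖²_{L²(𝒢_ε^d)} + ε ‖u'‖²_{L²(𝒢_ε^d)} ). (This is estimate (38) of Lemma 4.4.) -/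
open MeasureTheory ENNReal

namespace Stmt5

open MeasureTheory ENNReal Set

variable {d : ℕ} {ε : ℝ}

lemma line_isometry (y : Pt d) (j : Fin d) : Isometry (fun t : ℝ => upd y j t) := by
  apply Isometry.of_dist_eq
  intro s t
  rw [EuclideanSpace.dist_eq]
  rw [show ∑ i, dist (upd y j s i) (upd y j t i)^2 = dist s t ^2 from ?_]
  · exact Real.sqrt_sq dist_nonneg
  · rw [Finset.sum_eq_single j]
    · simp [upd]
    · intro i _ hi; simp [upd, Function.update_of_ne hi]
    · simp

lemma line_lintegral (y : Pt d) (j : Fin d) {s : Set ℝ}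
    (hs : MeasurableSet s) (f : Pt d → ℝ≥0∞) :
    ∫⁻ x in (fun t : ℝ => upd y j t) '' s, f x ∂(μH[1] : Measure (Pt d))
      = ∫⁻ t in s, f (upd y j t) ∂volume := by
  set φ := fun t : ℝ => upd y j t with hφdef
  have hφ : Isometry φ := line_isometry y j
  have hemb : MeasurableEmbedding φ := hφ.isClosedEmbedding.measurableEmbedding
  have h1 : (μH[1] : Measure (Pt d)).restrict (Set.range φ)
      = Measure.map φ (volume : Measure ℝ) := by
    rw [← MeasureTheory.hausdorffMeasure_real, hφ.map_hausdorffMeasure (Or.inl zero_le_one)]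
  have himg : φ '' s ⊆ Set.range φ := Set.image_subset_range _ _
  have hims : MeasurableSet (φ '' s) := hemb.measurableSet_image' hs
  calc ∫⁻ x in φ '' s, f x ∂(μH[1] : Measure (Pt d))
      = ∫⁻ x in φ '' s, f x ∂((μH[1] : Measure (Pt d)).restrict (Set.range φ)) := by
        rw [Measure.restrict_restrict hims, Set.inter_eq_left.2 himg]
    _ = ∫⁻ x in φ '' s, f x ∂(Measure.map φ (volume : Measure ℝ)) := by rw [h1]
    _ = ∫⁻ x, f x ∂(Measure.map φ ((volume : Measure ℝ).restrict (φ ⁻¹' (φ '' s)))) := by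
        rw [hemb.restrict_map]
    _ = ∫⁻ t in φ ⁻¹' (φ '' s), f (φ t) ∂volume := hemb.lintegral_map f
    _ = ∫⁻ t in s, f (φ t) ∂volume := by rw [hemb.injective.preimage_image]

/-- the half-open edge starting at vertex `v` in direction `j`. -/
def edge (d : ℕ) (ε : ℝ) (j : Fin d) (v : Fin d → ℤ) : Set (Pt d) :=
  (fun t : ℝ => upd (vert d ε v) j t) '' Set.Ico (ε * v j) (ε * v j + ε)

lemma vert_upd_self (v : Fin d → ℤ) (j : Fin d) :
    upd (vert d ε v) j (ε * v j) = vert d ε v := by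
  have : (ε : ℝ) * v j = vert d ε v j := rfl
  rw [this]; unfold upd; rw [Function.update_eq_self]

lemma mem_edge_iff {j : Fin d} {v : Fin d → ℤ} {x : Pt d} :
    x ∈ edge d ε j v ↔ (∀ i, i ≠ j → x i = ε * v i) ∧
      x j ∈ Set.Ico (ε * v j) (ε * v j + ε) := by
  constructor
  · rintro ⟨t, ht, rfl⟩
    refine ⟨fun i hi => ?_, ?_⟩
    · simp [upd, Function.update_of_ne hi, vert]
    · simpa [upd] using ht
  · rintro ⟨h1, h2⟩
    refine ⟨x j, h2, ?_⟩
    ext i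
    by_cases hi : i = j
    · subst hi; simp [upd]
    · simp [upd, Function.update_of_ne hi, h1 i hi, vert]

lemma edge_measurable (j : Fin d) (v : Fin d → ℤ) : MeasurableSet (edge d ε j v) :=
  ((line_isometry (vert d ε v) j).isClosedEmbedding.measurableEmbedding).measurableSet_image'
    measurableSet_Ico

lemma edge_disjoint (hε : 0 < ε) (j : Fin d) :
    Pairwise (Function.onFun Disjoint (edge d ε j)) := by
  intro v w hvw
  rw [Function.onFun, Set.disjoint_left]
  rintro x hxv hxw
  rw [mem_edge_iff] at hxv hxw
  apply hvw
  funext i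
  by_cases hi : i = j
  · subst hi
    have h1 := hxv.2; have h2 := hxw.2
    have hA : ε * (w i:ℝ) < ε * ((v i:ℝ)+1) := by nlinarith [h2.1, h1.2]
    have hB : ε * (v i:ℝ) < ε * ((w i:ℝ)+1) := by nlinarith [h1.1, h2.2]
    have hA' : (w i:ℝ) < (v i:ℝ)+1 := (mul_lt_mul_iff_right₀ hε).1 hA
    have hB' : (v i:ℝ) < (w i:ℝ)+1 := (mul_lt_mul_iff_right₀ hε).1 hB
    have c1 : w i < v i + 1 := by exact_mod_cast hA'
    have c2 : v i < w i + 1 := by exact_mod_cast hB'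
    omega
  · have := hxv.1 i hi; have h2 := hxw.1 i hi
    have : (v i : ℝ) = w i := by
      have := this.symm.trans h2
      exact mul_left_cancel₀ hε.ne' this
    exact_mod_cast this

end Stmt5
namespace Stmt5
open MeasureTheory ENNReal Set

variable {d : ℕ} {ε : ℝ} {u g : Pt d → ℝ}

lemma conj22 : Real.HolderConjugate 2 2 := Real.HolderConjugate.two_two

lemma ofReal_abs_rpow_two (x : ℝ) :
    (ENNReal.ofReal |x|) ^ (2:ℝ) = ENNReal.ofReal (x ^ 2) := by
  rw [ENNReal.ofReal_rpow_of_nonneg (abs_nonneg x) (by norm_num : (0:ℝ) ≤ 2)]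
  rw [show |x| ^ (2:ℝ) = |x| ^ (2:ℕ) from Real.rpow_natCast _ 2, sq_abs]

/-- Cauchy–Schwarz on the edge, `(∫ |G|)² ≤ (b-a) ∫ G²`, lintegral form. -/
lemma cs_edge {a b : ℝ} (G : ℝ → ℝ) (hG : Measurable G) :
    (∫⁻ t in Set.Ico a b, ENNReal.ofReal |G t|) * (∫⁻ t in Set.Ico a b, ENNReal.ofReal |G t|)
      ≤ ENNReal.ofReal (b - a) * ∫⁻ t in Set.Ico a b, ENNReal.ofReal (G t ^ 2) := by
  set μ := (volume : Measure ℝ).restrict (Set.Ico a b) with hμ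
  have hmeas : Measurable fun t => ENNReal.ofReal |G t| := hG.abs.ennreal_ofReal
  have key : (∫⁻ t, ENNReal.ofReal |G t| ∂μ)
      ≤ (∫⁻ _, (1:ℝ≥0∞) ^ (2:ℝ) ∂μ) ^ (1/(2:ℝ))
        * (∫⁻ t, (ENNReal.ofReal |G t|) ^ (2:ℝ) ∂μ) ^ (1/(2:ℝ)) := by
    have := ENNReal.lintegral_mul_le_Lp_mul_Lq μ conj22
      (f := fun _ => (1:ℝ≥0∞)) aemeasurable_const hmeas.aemeasurable
    simpa using this
  have h1 : (∫⁻ _, (1:ℝ≥0∞) ^ (2:ℝ) ∂μ) = ENNReal.ofReal (b - a) := by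
    simp [hμ, Real.volume_Ico]
  have h2 : (∫⁻ t, (ENNReal.ofReal |G t|) ^ (2:ℝ) ∂μ)
      = ∫⁻ t, ENNReal.ofReal (G t ^ 2) ∂μ := by
    refine lintegral_congr fun t => ofReal_abs_rpow_two (G t)
  rw [h1, h2] at key
  calc (∫⁻ t, ENNReal.ofReal |G t| ∂μ) * (∫⁻ t, ENNReal.ofReal |G t| ∂μ)
      ≤ (ENNReal.ofReal (b - a) ^ (1/(2:ℝ)) * (∫⁻ t, ENNReal.ofReal (G t ^ 2) ∂μ) ^ (1/(2:ℝ)))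
        * (ENNReal.ofReal (b - a) ^ (1/(2:ℝ)) * (∫⁻ t, ENNReal.ofReal (G t ^ 2) ∂μ) ^ (1/(2:ℝ))) :=
        mul_le_mul' key key
    _ = (ENNReal.ofReal (b - a) ^ (1/(2:ℝ)) * ENNReal.ofReal (b - a) ^ (1/(2:ℝ)))
        * ((∫⁻ t, ENNReal.ofReal (G t ^ 2) ∂μ) ^ (1/(2:ℝ))
          * (∫⁻ t, ENNReal.ofReal (G t ^ 2) ∂μ) ^ (1/(2:ℝ))) := by ring
    _ = ENNReal.ofReal (b - a) * ∫⁻ t, ENNReal.ofReal (G t ^ 2) ∂μ := by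
        rw [← ENNReal.rpow_add_of_nonneg _ _ (by norm_num) (by norm_num),
          ← ENNReal.rpow_add_of_nonneg _ _ (by norm_num) (by norm_num)]
        norm_num

end Stmt5
namespace Stmt5
open MeasureTheory ENNReal Set intervalIntegral

variable {d : ℕ} {ε : ℝ} {u g : Pt d → ℝ}

lemma vertex_bound (hε : 0 < ε) (H : IsGridH1 d ε u g) (j0 : Fin d) (v : Fin d → ℤ) :
    ENNReal.ofReal (u (vert d ε v) ^ 2) ≤
      ENNReal.ofReal (2/ε) * (∫⁻ x in edge d ε j0 v, ENNReal.ofReal (u x ^ 2) ∂(μH[1] : Measure (Pt d)))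
      + ENNReal.ofReal (2*ε) * (∫⁻ x in edge d ε j0 v, ENNReal.ofReal (g x ^ 2) ∂(μH[1] : Measure (Pt d))) := by
  set y : Pt d := vert d ε v with hy_def
  set a : ℝ := ε * (v j0 : ℝ) with ha_def
  have hy : ∀ i, i ≠ j0 → ∃ m : ℤ, y i = ε * m := fun i _ => ⟨v i, rfl⟩
  have hab : a ≤ a + ε := by linarith
  set G : ℝ → ℝ := fun r => g (upd y j0 r) with hG_def
  set JU := ∫⁻ t in Set.Ico a (a+ε), ENNReal.ofReal (u (upd y j0 t) ^ 2) with hJU_def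
  set JG := ∫⁻ t in Set.Ico a (a+ε), ENNReal.ofReal (G t ^ 2) with hJG_def
  have hedgeu : (∫⁻ x in edge d ε j0 v, ENNReal.ofReal (u x ^ 2) ∂(μH[1] : Measure (Pt d))) = JU :=
    line_lintegral y j0 measurableSet_Ico _
  have hedgeg : (∫⁻ x in edge d ε j0 v, ENNReal.ofReal (g x ^ 2) ∂(μH[1] : Measure (Pt d))) = JG :=
    line_lintegral y j0 measurableSet_Ico _
  have hGmeas : Measurable G := H.meas_g.comp ((MeasurableEquiv.toLp 2 (Fin d → ℝ)).measurable.comp (measurable_update y))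
  -- interval integrability of G on [a, a+ε]
  have hGint : IntervalIntegrable G volume a (a + ε) := by
    have := H.intInt j0 y hy (v j0)
    have he : ε * ((v j0 : ℝ) + 1) = a + ε := by rw [ha_def]; ring
    rwa [he] at this
  -- FTC
  have hftc : ∀ t ∈ Set.Icc a (a + ε), u (upd y j0 t) - u y = ∫ r in a..t, G r := by
    intro t ht
    have he : ε * ((v j0 : ℝ) + 1) = a + ε := by rw [ha_def]; ring
    have h := H.ftc j0 y hy (v j0) a (by rw [he]; exact ⟨le_refl a, hab⟩)
      t (by rw [he]; exact ht)
    rwa [vert_upd_self] at h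
  -- Cauchy–Schwarz bound for the integral of G
  set A1 := ∫⁻ t in Set.Ico a (a+ε), ENNReal.ofReal |G t| with hA1_def
  have hcs : A1 * A1 ≤ ENNReal.ofReal ε * JG := by
    have := cs_edge (a := a) (b := a + ε) G hGmeas
    rwa [add_sub_cancel_left] at this
  set B := ∫ r in a..(a+ε), |G r| with hB_def
  have hBnonneg : 0 ≤ B := integral_nonneg hab fun _ _ => abs_nonneg _
  have hofB : ENNReal.ofReal B = A1 := by
    rw [hB_def, integral_of_le hab,
      ofReal_integral_eq_lintegral_ofReal
        (((intervalIntegrable_iff_integrableOn_Ioc_of_le hab).1 hGint.abs))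
        (Filter.Eventually.of_forall fun _ => abs_nonneg _),
      hA1_def, ← Measure.restrict_congr_set Ico_ae_eq_Ioc]
  -- pointwise bound
  have key : ∀ t ∈ Set.Ico a (a + ε), ENNReal.ofReal (u y ^ 2)
      ≤ 2 * ENNReal.ofReal (u (upd y j0 t) ^ 2) + 2 * (ENNReal.ofReal ε * JG) := by
    intro t ht
    have htIcc : t ∈ Set.Icc a (a + ε) := ⟨ht.1, ht.2.le⟩
    set I := ∫ r in a..t, G r with hI_def
    have huy : u y = u (upd y j0 t) - I := by have := hftc t htIcc; linarith
    have hreal : u y ^ 2 ≤ 2 * u (upd y j0 t) ^ 2 + 2 * I ^ 2 := by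
      rw [huy]; nlinarith [sq_nonneg (u (upd y j0 t) + I)]
    have hIB : |I| ≤ B := by
      have h1 : |I| ≤ ∫ r in a..t, |G r| := abs_integral_le_integral_abs ht.1
      have hsub1 : Set.uIcc a t ⊆ Set.uIcc a (a+ε) := by
        rw [Set.uIcc_of_le ht.1, Set.uIcc_of_le hab]
        exact Set.Icc_subset_Icc le_rfl ht.2.le
      have hsub2 : Set.uIcc t (a+ε) ⊆ Set.uIcc a (a+ε) := by
        rw [Set.uIcc_of_le ht.2.le, Set.uIcc_of_le hab]
        exact Set.Icc_subset_Icc ht.1 le_rfl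
      have hit : IntervalIntegrable (fun r => |G r|) volume a t := hGint.abs.mono_set hsub1
      have hit2 : IntervalIntegrable (fun r => |G r|) volume t (a+ε) := hGint.abs.mono_set hsub2
      have hsplit : (∫ r in a..t, |G r|) + ∫ r in t..(a+ε), |G r| = B :=
        integral_add_adjacent_intervals hit hit2
      have hnn : 0 ≤ ∫ r in t..(a+ε), |G r| :=
        integral_nonneg ht.2.le fun _ _ => abs_nonneg _
      linarith
    have hI2 : ENNReal.ofReal (I ^ 2) ≤ ENNReal.ofReal ε * JG := by
      calc ENNReal.ofReal (I ^ 2) ≤ ENNReal.ofReal (B ^ 2) := by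
            apply ENNReal.ofReal_le_ofReal
            calc I ^ 2 = |I| ^ 2 := (sq_abs I).symm
              _ ≤ B ^ 2 := by apply pow_le_pow_left₀ (abs_nonneg I) hIB
        _ = ENNReal.ofReal B * ENNReal.ofReal B := by
            rw [← ENNReal.ofReal_mul hBnonneg, sq]
        _ = A1 * A1 := by rw [hofB]
        _ ≤ ENNReal.ofReal ε * JG := hcs
    calc ENNReal.ofReal (u y ^ 2)
        ≤ ENNReal.ofReal (2 * u (upd y j0 t) ^ 2 + 2 * I ^ 2) := ENNReal.ofReal_le_ofReal hreal
      _ = 2 * ENNReal.ofReal (u (upd y j0 t) ^ 2) + 2 * ENNReal.ofReal (I ^ 2) := by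
          rw [ENNReal.ofReal_add (by positivity) (by positivity),
            ENNReal.ofReal_mul (by norm_num), ENNReal.ofReal_mul (by norm_num),
            ENNReal.ofReal_ofNat]
      _ ≤ 2 * ENNReal.ofReal (u (upd y j0 t) ^ 2) + 2 * (ENNReal.ofReal ε * JG) := by
          gcongr
  -- integrate `key` over the edge
  have hUmeas : Measurable fun t => ENNReal.ofReal (u (upd y j0 t) ^ 2) :=
    ((H.meas_u.comp ((MeasurableEquiv.toLp 2 (Fin d → ℝ)).measurable.comp (measurable_update y))).pow_const 2).ennreal_ofReal
  have hvol : (volume : Measure ℝ) (Set.Ico a (a+ε)) = ENNReal.ofReal ε := by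
    rw [Real.volume_Ico, add_sub_cancel_left]
  have hint : ENNReal.ofReal (u y ^ 2) * ENNReal.ofReal ε
      ≤ 2 * JU + 2 * (ENNReal.ofReal ε * JG) * ENNReal.ofReal ε := by
    calc ENNReal.ofReal (u y ^ 2) * ENNReal.ofReal ε
        = ∫⁻ _ in Set.Ico a (a+ε), ENNReal.ofReal (u y ^ 2) := by
          rw [setLIntegral_const, hvol]
      _ ≤ ∫⁻ t in Set.Ico a (a+ε),
            (2 * ENNReal.ofReal (u (upd y j0 t) ^ 2) + 2 * (ENNReal.ofReal ε * JG)) :=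
          setLIntegral_mono' measurableSet_Ico key
      _ = 2 * JU + 2 * (ENNReal.ofReal ε * JG) * ENNReal.ofReal ε := by
          rw [lintegral_add_right _ measurable_const, lintegral_const_mul _ hUmeas,
            setLIntegral_const, hvol, hJU_def]
  -- divide by ε
  rw [hedgeu, hedgeg]
  refine (ENNReal.mul_le_mul_iff_left (c := ENNReal.ofReal ε)
    (ENNReal.ofReal_pos.2 hε).ne' ENNReal.ofReal_ne_top).1 ?_
  have hb : (ENNReal.ofReal (2/ε) * JU + ENNReal.ofReal (2*ε) * JG) * ENNReal.ofReal ε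
      = 2 * JU + 2 * (ENNReal.ofReal ε * JG) * ENNReal.ofReal ε := by
    have e1 : ENNReal.ofReal (2/ε) * ENNReal.ofReal ε = 2 := by
      rw [← ENNReal.ofReal_mul (by positivity), div_mul_cancel₀ _ hε.ne']
      exact ENNReal.ofReal_ofNat 2
    have e2 : ENNReal.ofReal (2*ε) = 2 * ENNReal.ofReal ε := by
      rw [ENNReal.ofReal_mul (by norm_num), ENNReal.ofReal_ofNat]
    calc (ENNReal.ofReal (2/ε) * JU + ENNReal.ofReal (2*ε) * JG) * ENNReal.ofReal ε
        = ENNReal.ofReal (2/ε) * ENNReal.ofReal ε * JU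
          + ENNReal.ofReal (2*ε) * JG * ENNReal.ofReal ε := by ring
      _ = 2 * JU + 2 * (ENNReal.ofReal ε * JG) * ENNReal.ofReal ε := by rw [e1, e2]; ring
  rw [hb]
  exact hint

end Stmt5
namespace Stmt5
open MeasureTheory ENNReal Set

variable {d : ℕ} {ε : ℝ} {u g : Pt d → ℝ}

lemma tsum_vertex_le (hd : 2 ≤ d) (hε : 0 < ε) (H : IsGridH1 d ε u g) :
    (∑' v : Fin d → ℤ, ENNReal.ofReal (u (vert d ε v) ^ 2))
      ≤ ENNReal.ofReal (2/ε) * gridL2sq d ε u + ENNReal.ofReal (2*ε) * gridL2sq d ε g := by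
  have hd0 : 0 < d := by omega
  set j0 : Fin d := ⟨0, hd0⟩ with hj0
  have hsub : ∀ f : Pt d → ℝ≥0∞,
      (∑' v : Fin d → ℤ, ∫⁻ x in edge d ε j0 v, f x ∂(μH[1] : Measure (Pt d)))
        ≤ ∫⁻ x in grid d ε, f x ∂(μH[1] : Measure (Pt d)) := by
    intro f
    rw [← lintegral_iUnion (fun v => edge_measurable j0 v) (edge_disjoint hε j0) f]
    apply lintegral_mono_set
    rintro x hx
    rcases Set.mem_iUnion.1 hx with ⟨v, hv⟩
    exact Set.mem_iUnion.2 ⟨j0, fun i hi => ⟨v i, (mem_edge_iff.1 hv).1 i hi⟩⟩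
  calc (∑' v : Fin d → ℤ, ENNReal.ofReal (u (vert d ε v) ^ 2))
      ≤ ∑' v : Fin d → ℤ,
          (ENNReal.ofReal (2/ε) * (∫⁻ x in edge d ε j0 v, ENNReal.ofReal (u x ^ 2) ∂(μH[1] : Measure (Pt d)))
            + ENNReal.ofReal (2*ε) * (∫⁻ x in edge d ε j0 v, ENNReal.ofReal (g x ^ 2) ∂(μH[1] : Measure (Pt d)))) :=
        ENNReal.tsum_le_tsum (fun v => vertex_bound hε H j0 v)
    _ = ENNReal.ofReal (2/ε) * (∑' v : Fin d → ℤ, ∫⁻ x in edge d ε j0 v, ENNReal.ofReal (u x ^ 2) ∂(μH[1] : Measure (Pt d)))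
        + ENNReal.ofReal (2*ε) * (∑' v : Fin d → ℤ, ∫⁻ x in edge d ε j0 v, ENNReal.ofReal (g x ^ 2) ∂(μH[1] : Measure (Pt d))) := by
        rw [ENNReal.tsum_add, ENNReal.tsum_mul_left, ENNReal.tsum_mul_left]
    _ ≤ ENNReal.ofReal (2/ε) * gridL2sq d ε u + ENNReal.ofReal (2*ε) * gridL2sq d ε g := by
        unfold gridL2sq gridInt
        gcongr
        · exact hsub _
        · exact hsub _

end Stmt5
namespace Stmt5
open MeasureTheory ENNReal Set

variable {d : ℕ} {ε : ℝ} {u A : Pt d → ℝ}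

/-- translated integer corner -/
def kb {d : ℕ} (k : Fin d → ℤ) (δ : Fin d → Bool) : Fin d → ℤ :=
  fun i => k i + if δ i then 1 else 0

lemma affine_cube_bound (hd : 2 ≤ d) (hε : 0 < ε) (hA : IsAffExt d ε u A)
    (k : Fin d → ℤ) (x : Pt d) (hx : ∀ i, x i ∈ Set.Icc (ε * k i) (ε * k i + ε)) :
    A x ^ 2 ≤ ∑ δ : Fin d → Bool, u (vert d ε (kb k δ)) ^ 2 := by
  classical
  set s : Fin d → ℝ := fun i => x i - ε * k i with hs_def
  set σ : Equiv.Perm (Fin d) := Tuple.sort s with hσ_def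
  have hmono : Monotone (s ∘ σ) := Tuple.monotone_sort s
  obtain ⟨L, c, hLc⟩ := hA.2 k σ
  have hs01 : ∀ i, 0 ≤ s i ∧ s i ≤ ε := fun i => ⟨by simp [hs_def, (hx i).1, sub_nonneg],
    by have := (hx i).2; simp [hs_def]; linarith⟩
  have hxS : x ∈ simplexS d ε k σ := by
    refine ⟨fun i => ⟨(hx i).1, ?_⟩, fun a b hab => hmono hab⟩
    have := (hx i).2; push_cast; linarith
  -- the interpolation data
  set r : ℕ → ℝ := fun j => if h : j < d then s (σ ⟨j, h⟩) / ε else 1 with hr_def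
  set F : ℕ → ℝ := fun j => if h : j = 0 then 0 else r (j - 1) with hF_def
  set lam : ℕ → ℝ := fun m => F (d - m + 1) - F (d - m) with hlam_def
  have hF0 : F 0 = 0 := by simp [hF_def]
  have hFsucc : ∀ j, F (j + 1) = r j := fun j => by simp [hF_def]
  have hr01 : ∀ j, 0 ≤ r j ∧ r j ≤ 1 := by
    intro j
    by_cases h : j < d
    · constructor
      · rw [hr_def]; simp only [h, dif_pos]; exact div_nonneg (hs01 _).1 hε.le
      · rw [hr_def]; simp only [h, dif_pos]
        rw [div_le_one hε]; exact (hs01 _).2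
    · rw [hr_def]; simp [h]
  have hrmono : Monotone r := by
    intro j1 j2 hj
    by_cases h2 : j2 < d
    · have h1 : j1 < d := lt_of_le_of_lt hj h2
      rw [hr_def]; simp only [h1, h2, dif_pos]
      apply div_le_div_of_nonneg_right ?_ hε.le
      · exact hmono (show (⟨j1, h1⟩ : Fin d) ≤ ⟨j2, h2⟩ from hj)
    · rw [hr_def]; simp only [h2, dif_neg, not_false_iff]
      exact (hr01 j1).2
  have hFmono : ∀ j, F j ≤ F (j + 1) := by
    intro j
    cases j with
    | zero => rw [hF0, hFsucc]; exact (hr01 0).1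
    | succ j => rw [hFsucc, hFsucc]; exact hrmono (Nat.le_succ j)
  have hlam_nonneg : ∀ m, 0 ≤ lam m := fun m => sub_nonneg.2 (hFmono (d - m))
  have hlam_sum : ∑ m ∈ Finset.range (d+1), lam m = 1 := by
    have hrefl := Finset.sum_range_reflect (fun j => F (j+1) - F j) (d+1)
    have : ∀ m ∈ Finset.range (d+1), lam m = F (d - m + 1) - F (d - m) := fun m _ => rfl
    rw [Finset.sum_congr rfl this]
    have heq : ∀ m ∈ Finset.range (d+1), F (d - m + 1) - F (d - m)
        = (fun j => F (j+1) - F j) (d + 1 - 1 - m) := by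
      intro m hm; simp only [Nat.add_sub_cancel]
    rw [Finset.sum_congr rfl heq, hrefl, Finset.sum_range_sub, hF0, hFsucc]
    simp [hr_def]
  -- the simplex corners
  set Δ : ℕ → (Fin d → Bool) := fun m i => decide (d ≤ m + (σ.symm i : ℕ)) with hΔ_def
  set q : ℕ → Pt d := fun m => vert d ε (kb k (Δ m)) with hq_def
  have hq_coord : ∀ m i, q m i = ε * (k i : ℝ) + ε * (if d ≤ m + (σ.symm i : ℕ) then 1 else 0) := by
    intro m i
    show (ε : ℝ) * ((kb k (Δ m) i : ℤ) : ℝ) = _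
    rw [kb, hΔ_def]
    by_cases h : d ≤ m + (σ.symm i : ℕ) <;> simp [h] <;> push_cast <;> ring
  have hqS : ∀ m, q m ∈ simplexS d ε k σ := by
    intro m
    constructor
    · intro i
      rw [hq_coord]
      simp only [Set.mem_Icc]
      constructor
      · by_cases h : d ≤ m + (σ.symm i : ℕ) <;> simp [h] <;> push_cast <;> nlinarith
      · by_cases h : d ≤ m + (σ.symm i : ℕ) <;> simp [h] <;> push_cast <;> nlinarith
    · intro a b hab
      rw [hq_coord, hq_coord]
      simp only [Equiv.symm_apply_apply]
      by_cases ha : d ≤ m + (a : ℕ)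
      · have hb : d ≤ m + (b : ℕ) := le_trans ha (by have : (a:ℕ) ≤ b := hab; omega)
        simp [ha, hb]
      · by_cases hb : d ≤ m + (b : ℕ) <;> simp [ha, hb] <;> nlinarith
  have hqA : ∀ m, A (q m) = L (q m) + c := fun m => hLc _ (hqS m)
  have hqu : ∀ m, A (q m) = u (q m) := fun m => hA.1 _
  -- convex combination
  have hT : ∀ a : ℕ, a < d → ∑ m ∈ Finset.range (d+1), (if d ≤ m + a then lam m else 0) = r a := by
    intro a ha
    have hrefl := Finset.sum_range_reflect (fun j => if j ≤ a then F (j+1) - F j else 0) (d+1)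
    have h1 : ∀ m ∈ Finset.range (d+1),
        (if d ≤ m + a then lam m else 0)
          = (fun j => if j ≤ a then F (j+1) - F j else 0) (d + 1 - 1 - m) := by
      intro m hm
      rw [Finset.mem_range] at hm
      have hdm : d + 1 - 1 - m = d - m := by omega
      rw [hdm]
      simp only
      have : (d ≤ m + a) ↔ (d - m ≤ a) := by omega
      by_cases h : d ≤ m + a
      · rw [if_pos h, if_pos (this.1 h)]
      · rw [if_neg h, if_neg (fun hc => h (this.2 hc))]
    rw [Finset.sum_congr rfl h1, hrefl]
    have h2 : ∑ j ∈ Finset.range (d+1), (if j ≤ a then F (j+1) - F j else 0)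
        = ∑ j ∈ Finset.range (a+1), (F (j+1) - F j) := by
      rw [← Finset.sum_subset (Finset.range_subset_range.2 (by omega : a+1 ≤ d+1))]
      · apply Finset.sum_congr rfl
        intro j hj
        rw [Finset.mem_range] at hj
        rw [if_pos (by omega : j ≤ a)]
      · intro j _ hj
        rw [Finset.mem_range] at hj
        rw [if_neg (by omega : ¬ j ≤ a)]
    rw [h2, Finset.sum_range_sub, hF0, hFsucc, sub_zero]
  have hxcomb : x = ∑ m ∈ Finset.range (d+1), lam m • q m := by
    ext i
    rw [WithLp.ofLp_sum, Finset.sum_apply]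
    have ha : ((σ.symm i : Fin d) : ℕ) < d := (σ.symm i).2
    have hterm : ∀ m ∈ Finset.range (d+1), (lam m • q m) i
        = (ε * (k i : ℝ)) * lam m + ε * (if d ≤ m + ((σ.symm i : Fin d) : ℕ) then lam m else 0) := by
      intro m _
      have : (lam m • q m) i = lam m * q m i := rfl
      rw [this, hq_coord]
      by_cases h : d ≤ m + ((σ.symm i : Fin d) : ℕ)
      · rw [if_pos h, if_pos h]; ring
      · rw [if_neg h, if_neg h]; ring
    rw [Finset.sum_congr rfl hterm, Finset.sum_add_distrib, ← Finset.mul_sum, hlam_sum,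
      ← Finset.mul_sum, hT _ ha]
    have hra : r ((σ.symm i : Fin d) : ℕ) = s i / ε := by
      rw [hr_def]
      simp only [ha, dif_pos]
      congr 1
      have : (⟨((σ.symm i : Fin d) : ℕ), ha⟩ : Fin d) = σ.symm i := by
        apply Fin.ext; rfl
      rw [this, Equiv.apply_symm_apply]
    rw [hra, mul_one, mul_div_cancel₀ _ hε.ne']
    show x i = ε * (k i : ℝ) + (x i - ε * (k i : ℝ))
    ring
  -- A x as convex combination of vertex values
  have hAx : A x = ∑ m ∈ Finset.range (d+1), lam m * u (q m) := by
    have hx' : A x = L x + c := hLc x hxS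
    have hLx : L x = ∑ m ∈ Finset.range (d+1), lam m * L (q m) := by
      rw [hxcomb, map_sum]
      apply Finset.sum_congr rfl
      intro m _
      exact (L.map_smul (lam m) (q m)).trans (smul_eq_mul ..)
    rw [hx', hLx]
    rw [show (c:ℝ) = (∑ m ∈ Finset.range (d+1), lam m) * c by rw [hlam_sum, one_mul]]
    rw [Finset.sum_mul, ← Finset.sum_add_distrib]
    apply Finset.sum_congr rfl
    intro m _
    rw [← hqu m, hqA m]
    ring
  -- Cauchy–Schwarz / convexity
  have hsq : A x ^ 2 ≤ ∑ m ∈ Finset.range (d+1), u (q m) ^ 2 := by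
    have hcs := Finset.sum_sq_le_sum_mul_sum_of_sq_eq_mul (Finset.range (d+1))
      (r := fun m => lam m * u (q m)) (f := fun m => lam m)
      (g := fun m => lam m * u (q m) ^ 2)
      (fun m _ => hlam_nonneg m)
      (fun m _ => mul_nonneg (hlam_nonneg m) (sq_nonneg _))
      (fun m _ => by ring)
    rw [hlam_sum, one_mul] at hcs
    rw [hAx]
    refine le_trans hcs (Finset.sum_le_sum ?_)
    intro m hm
    have hlam_le_one : lam m ≤ 1 := by
      rw [← hlam_sum]
      exact Finset.single_le_sum (fun n _ => hlam_nonneg n) hm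
    exact mul_le_of_le_one_left (sq_nonneg _) hlam_le_one
  -- sum over distinct corners
  have hinj : Set.InjOn Δ (Finset.range (d+1) : Set ℕ) := by
    have key : ∀ m m', m' < m → m < d + 1 → Δ m ≠ Δ m' := by
      intro m m' hlt hm heq
      have hm1 : 1 ≤ m := by omega
      have hdm : d - m < d := by omega
      set i : Fin d := σ ⟨d - m, hdm⟩ with hi_def
      have hsymm : ((σ.symm i : Fin d) : ℕ) = d - m := by
        rw [hi_def, Equiv.symm_apply_apply]
      have h1 : Δ m i = true := by
        rw [hΔ_def]; simp only [hsymm]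
        simp [decide_eq_true_iff]; omega
      have h2 : Δ m' i = false := by
        rw [hΔ_def]; simp only [hsymm]
        simp [decide_eq_false_iff_not]; omega
      rw [heq, h2] at h1
      exact Bool.false_ne_true h1
    intro m hm m' hm' heq
    simp only [Finset.coe_range, Set.mem_Iio] at hm hm'
    by_contra hne
    rcases lt_or_gt_of_ne hne with h | h
    · exact key m' m h hm' heq.symm
    · exact key m m' h hm heq
  calc A x ^ 2 ≤ ∑ m ∈ Finset.range (d+1), u (q m) ^ 2 := hsq
    _ = ∑ δ ∈ (Finset.range (d+1)).image Δ, u (vert d ε (kb k δ)) ^ 2 := by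
        rw [Finset.sum_image (fun m hm m' hm' heq => hinj (by simpa using hm) (by simpa using hm') heq)]
    _ ≤ ∑ δ : Fin d → Bool, u (vert d ε (kb k δ)) ^ 2 := by
        apply Finset.sum_le_sum_of_subset_of_nonneg (Finset.subset_univ _)
        intro δ _ _
        exact sq_nonneg _

end Stmt5
namespace Stmt5
open MeasureTheory ENNReal Set

variable {d : ℕ} {ε : ℝ} {u A : Pt d → ℝ}

def cube (d : ℕ) (ε : ℝ) (k : Fin d → ℤ) : Set (Pt d) :=
  {x | ∀ i, x i ∈ Set.Ico (ε * k i) (ε * k i + ε)}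

lemma cube_measurable (k : Fin d → ℤ) : MeasurableSet (cube d ε k) := by
  have : cube d ε k = ⋂ i, (fun x : Pt d => x i) ⁻¹' Set.Ico (ε * k i) (ε * k i + ε) := by
    ext x; simp [cube, Set.mem_iInter]
  rw [this]
  exact MeasurableSet.iInter fun i => (by fun_prop : Measurable fun x : Pt d => x i) measurableSet_Ico

lemma cube_volume (hε : 0 < ε) (k : Fin d → ℤ) :
    (volume : Measure (Pt d)) (cube d ε k) = (ENNReal.ofReal ε) ^ d := by
  have hmp := EuclideanSpace.volume_preserving_symm_measurableEquiv_toLp (Fin d)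
  have hpre : cube d ε k
      = (MeasurableEquiv.toLp 2 (Fin d → ℝ)).symm ⁻¹'
        (Set.univ.pi fun i => Set.Ico (ε * k i) (ε * k i + ε)) := by
    ext x
    simp [cube, MeasurableEquiv.toLp, Set.mem_pi]; rfl
  rw [hpre, MeasurePreserving.measure_preimage hmp
    (MeasurableSet.univ_pi fun i => measurableSet_Ico).nullMeasurableSet]
  rw [volume_pi_pi]
  simp [Real.volume_Ico, Finset.prod_const, Finset.card_univ]

lemma mem_cube_floor (hε : 0 < ε) (x : Pt d) :
    x ∈ cube d ε (fun i => ⌊x i / ε⌋) := by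
  intro i
  have h1 : ε * (⌊x i / ε⌋ : ℝ) ≤ x i := by
    have := mul_le_mul_of_nonneg_left (Int.floor_le (x i / ε)) hε.le
    rwa [mul_div_cancel₀ _ hε.ne'] at this
  have h2 : x i < ε * (⌊x i / ε⌋ : ℝ) + ε := by
    have := mul_lt_mul_of_pos_left (Int.lt_floor_add_one (x i / ε)) hε
    rw [mul_div_cancel₀ _ hε.ne'] at this
    linarith [this]
  exact ⟨h1, h2⟩

lemma lintegral_A_le (hd : 2 ≤ d) (hε : 0 < ε) (hA : IsAffExt d ε u A) :
    (∫⁻ x, ENNReal.ofReal (A x ^ 2))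
      ≤ (ENNReal.ofReal ε) ^ d *
        ∑' k : Fin d → ℤ, ENNReal.ofReal (∑ δ : Fin d → Bool, u (vert d ε (kb k δ)) ^ 2) := by
  set c : (Fin d → ℤ) → ℝ≥0∞ :=
    fun k => ENNReal.ofReal (∑ δ : Fin d → Bool, u (vert d ε (kb k δ)) ^ 2) with hc_def
  have hpt : ∀ x : Pt d, ENNReal.ofReal (A x ^ 2)
      ≤ ∑' k : Fin d → ℤ, (cube d ε k).indicator (fun _ => c k) x := by
    intro x
    set k0 : Fin d → ℤ := fun i => ⌊x i / ε⌋ with hk0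
    have hx0 : x ∈ cube d ε k0 := mem_cube_floor hε x
    have hbound : ENNReal.ofReal (A x ^ 2) ≤ c k0 := by
      apply ENNReal.ofReal_le_ofReal
      apply affine_cube_bound hd hε hA k0 x
      intro i
      exact ⟨(hx0 i).1, (hx0 i).2.le⟩
    calc ENNReal.ofReal (A x ^ 2) ≤ c k0 := hbound
      _ = (cube d ε k0).indicator (fun _ => c k0) x := by rw [Set.indicator_of_mem hx0]
      _ ≤ ∑' k, (cube d ε k).indicator (fun _ => c k) x := ENNReal.le_tsum k0
  calc (∫⁻ x, ENNReal.ofReal (A x ^ 2))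
      ≤ ∫⁻ x, ∑' k : Fin d → ℤ, (cube d ε k).indicator (fun _ => c k) x := lintegral_mono hpt
    _ = ∑' k : Fin d → ℤ, ∫⁻ x, (cube d ε k).indicator (fun _ => c k) x :=
        lintegral_tsum fun k => (measurable_const.indicator (cube_measurable k)).aemeasurable
    _ = ∑' k : Fin d → ℤ, c k * (volume : Measure (Pt d)) (cube d ε k) := by
        apply tsum_congr
        intro k
        rw [lintegral_indicator (cube_measurable k), setLIntegral_const]
    _ = (ENNReal.ofReal ε) ^ d * ∑' k : Fin d → ℤ, c k := by
        rw [← ENNReal.tsum_mul_left]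
        apply tsum_congr
        intro k
        rw [cube_volume hε k, mul_comm]

lemma tsum_corner_eq :
    (∑' k : Fin d → ℤ, ENNReal.ofReal (∑ δ : Fin d → Bool, u (vert d ε (kb k δ)) ^ 2))
      = 2 ^ d * ∑' v : Fin d → ℤ, ENNReal.ofReal (u (vert d ε v) ^ 2) := by
  have h1 : ∀ k : Fin d → ℤ, ENNReal.ofReal (∑ δ : Fin d → Bool, u (vert d ε (kb k δ)) ^ 2)
      = ∑ δ : Fin d → Bool, ENNReal.ofReal (u (vert d ε (kb k δ)) ^ 2) :=
    fun k => ENNReal.ofReal_sum_of_nonneg fun δ _ => sq_nonneg _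
  rw [tsum_congr h1]
  rw [Summable.tsum_finsetSum (fun δ _ => ENNReal.summable)]
  have h2 : ∀ δ : Fin d → Bool,
      (∑' k : Fin d → ℤ, ENNReal.ofReal (u (vert d ε (kb k δ)) ^ 2))
        = ∑' v : Fin d → ℤ, ENNReal.ofReal (u (vert d ε v) ^ 2) := by
    intro δ
    have := (Equiv.addRight (fun i => if δ i then (1:ℤ) else 0)).tsum_eq
      (fun v : Fin d → ℤ => ENNReal.ofReal (u (vert d ε v) ^ 2))
    rw [← this]
    apply tsum_congr
    intro k
    rfl
  rw [Finset.sum_congr rfl fun δ _ => h2 δ, Finset.sum_const, Finset.card_univ]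
  rw [nsmul_eq_mul]
  congr 1
  rw [Fintype.card_fun]
  simp

end Stmt5

/-- estimate (38) of Lemma 4.4. -/
theorem stmt_5 (d : ℕ) (hd : 2 ≤ d) :
    ∃ ε₀ : ℝ, 0 < ε₀ ∧ ∀ ε : ℝ, 0 < ε → ε < ε₀ →
      ∀ u g A : Pt d → ℝ, IsGridH1 d ε u g → IsAffExt d ε u A →
        (∫⁻ x, ENNReal.ofReal ((A x) ^ 2)) ≤
          ENNReal.ofReal (2 ^ d * ((d : ℝ) + 1) * ε ^ (d - 1)) *
            (gridL2sq d ε u + ENNReal.ofReal ε * gridL2sq d ε g) := by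

  refine ⟨1, one_pos, ?_⟩
  intro ε hε hε1 u g A H hA
  set Nu := gridL2sq d ε u
  set Ng := gridL2sq d ε g
  set S := ∑' v : Fin d → ℤ, ENNReal.ofReal (u (vert d ε v) ^ 2) with hS_def
  set C := ENNReal.ofReal (2 ^ d * ((d : ℝ) + 1) * ε ^ (d - 1)) with hC_def
  have hεd : ε ^ d = ε ^ (d - 1) * ε := by
    rw [← pow_succ]; congr 1; omega
  have hP : (0:ℝ) < 2 ^ d := by positivity
  have hQ : (0:ℝ) ≤ ε ^ (d - 1) := by positivity
  have hd2 : (2:ℝ) ≤ (d:ℝ) := by exact_mod_cast hd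
  have hE2 : ((2:ℝ≥0∞)) ^ d = ENNReal.ofReal (2 ^ d) := by
    rw [ENNReal.ofReal_pow (by norm_num : (0:ℝ) ≤ 2)]
    norm_num
  have hEe : (ENNReal.ofReal ε) ^ d = ENNReal.ofReal (ε ^ d) := (ENNReal.ofReal_pow hε.le d).symm
  have hC1 : (ENNReal.ofReal ε) ^ d * ((2:ℝ≥0∞) ^ d * ENNReal.ofReal (2/ε)) ≤ C := by
    rw [hEe, hE2, ← ENNReal.ofReal_mul (by positivity), ← ENNReal.ofReal_mul (by positivity),
      hC_def]
    apply ENNReal.ofReal_le_ofReal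
    rw [hεd]
    rw [show ε ^ (d-1) * ε * (2 ^ d * (2/ε)) = (2 ^ d * 2 * ε ^ (d-1)) * (ε / ε) by ring,
      div_self hε.ne', mul_one]
    nlinarith [mul_nonneg (mul_nonneg hP.le hQ) (by linarith : (0:ℝ) ≤ (d:ℝ) - 1)]
  have hC2 : (ENNReal.ofReal ε) ^ d * ((2:ℝ≥0∞) ^ d * ENNReal.ofReal (2*ε))
      ≤ C * ENNReal.ofReal ε := by
    rw [hEe, hE2, ← ENNReal.ofReal_mul (by positivity), ← ENNReal.ofReal_mul (by positivity),
      hC_def, ← ENNReal.ofReal_mul (by positivity)]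
    apply ENNReal.ofReal_le_ofReal
    rw [hεd]
    nlinarith [mul_nonneg (mul_nonneg (mul_nonneg hP.le hQ) hε.le)
      (by linarith : (0:ℝ) ≤ (d:ℝ) + 1 - 2*ε)]
  calc (∫⁻ x, ENNReal.ofReal ((A x) ^ 2))
      ≤ (ENNReal.ofReal ε) ^ d *
          ∑' k : Fin d → ℤ, ENNReal.ofReal (∑ δ : Fin d → Bool, u (vert d ε (Stmt5.kb k δ)) ^ 2) :=
        Stmt5.lintegral_A_le hd hε hA
    _ = (ENNReal.ofReal ε) ^ d * ((2:ℝ≥0∞) ^ d * S) := by rw [Stmt5.tsum_corner_eq]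
    _ ≤ (ENNReal.ofReal ε) ^ d *
        ((2:ℝ≥0∞) ^ d * (ENNReal.ofReal (2/ε) * Nu + ENNReal.ofReal (2*ε) * Ng)) := by
        gcongr
        exact Stmt5.tsum_vertex_le hd hε H
    _ = ((ENNReal.ofReal ε) ^ d * ((2:ℝ≥0∞) ^ d * ENNReal.ofReal (2/ε))) * Nu
        + ((ENNReal.ofReal ε) ^ d * ((2:ℝ≥0∞) ^ d * ENNReal.ofReal (2*ε))) * Ng := by ring
    _ ≤ C * Nu + (C * ENNReal.ofReal ε) * Ng := by gcongr
    _ = C * (Nu + ENNReal.ofReal ε * Ng) := by ring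
end

section
/- Let d ≥ 2. For every ε > 0 and every H¹(𝒢_ε^d)-function u: ‖∇𝒜u‖²_{L²(ℝ^d)} ≤ ε^{d−1} ‖u'‖²_{L²(𝒢_ε^d)}. (This is estimate (39) of Lemma 4.4.) -/
open MeasureTheory ENNReal

open MeasureTheory ENNReal Set


lemma cs1d {a b : ℝ} (hab : a ≤ b) {h : ℝ → ℝ}
    (hint : IntervalIntegrable h volume a b) :
    ENNReal.ofReal ((∫ t in a..b, h t) ^ 2) ≤
      ENNReal.ofReal (b - a) * ∫⁻ t in Set.Ioo a b, ENNReal.ofReal (h t ^ 2) := by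
  have hIoo : (∫⁻ t in Set.Ioc a b, ENNReal.ofReal (h t ^ 2))
      = ∫⁻ t in Set.Ioo a b, ENNReal.ofReal (h t ^ 2) := by
    rw [Measure.restrict_congr_set Ioo_ae_eq_Ioc]
  rw [← hIoo]
  have h1 : ENNReal.ofReal ((∫ t in a..b, h t) ^ 2)
      = (ENNReal.ofReal |∫ t in a..b, h t|) ^ 2 := by
    rw [← ENNReal.ofReal_pow (abs_nonneg _), sq_abs]
  have h2 : ENNReal.ofReal |∫ t in a..b, h t| ≤ ∫⁻ t in Set.Ioc a b, (‖h t‖₊ : ℝ≥0∞) := by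
    rw [intervalIntegral.integral_of_le hab, ← Real.enorm_eq_ofReal_abs]
    exact enorm_integral_le_lintegral_enorm _
  have hmeas : AEMeasurable (fun t => (‖h t‖₊ : ℝ≥0∞)) (volume.restrict (Set.Ioc a b)) := by
    exact hint.1.aestronglyMeasurable.enorm
  have h3 : (∫⁻ t in Set.Ioc a b, (‖h t‖₊ : ℝ≥0∞))
      ≤ ((∫⁻ t in Set.Ioc a b, ((‖h t‖₊ : ℝ≥0∞)) ^ (2:ℝ)) ^ (1/(2:ℝ))) *
        ((∫⁻ t in Set.Ioc a b, (1:ℝ≥0∞)) ^ (1/(2:ℝ))) := by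
    have hpq : Real.HolderConjugate 2 2 := Real.HolderConjugate.two_two
    have := ENNReal.lintegral_mul_le_Lp_mul_Lq (volume.restrict (Set.Ioc a b)) hpq hmeas
      (aemeasurable_const (b := (1:ℝ≥0∞)))
    simpa using this
  have h4 : (∫⁻ t in Set.Ioc a b, ((‖h t‖₊ : ℝ≥0∞)) ^ (2:ℝ))
      = ∫⁻ t in Set.Ioc a b, ENNReal.ofReal (h t ^ 2) := by
    refine lintegral_congr fun t => ?_
    rw [show ((‖h t‖₊ : ℝ≥0∞)) = ENNReal.ofReal |h t| from Real.enorm_eq_ofReal_abs _, ENNReal.ofReal_rpow_of_nonneg (abs_nonneg _) (by norm_num),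
      show (2:ℝ) = ((2:ℕ):ℝ) by norm_num, Real.rpow_natCast, sq_abs]
  have h5 : (∫⁻ t in Set.Ioc a b, (1:ℝ≥0∞)) = ENNReal.ofReal (b - a) := by
    simp [Real.volume_Ioc]
  set X := ∫⁻ t in Set.Ioc a b, ENNReal.ofReal (h t ^ 2)
  calc ENNReal.ofReal ((∫ t in a..b, h t) ^ 2)
      = (ENNReal.ofReal |∫ t in a..b, h t|) ^ 2 := h1
    _ ≤ ((X ^ (1/(2:ℝ))) * ((ENNReal.ofReal (b - a)) ^ (1/(2:ℝ)))) ^ 2 := by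
        apply pow_le_pow_left' (h2.trans _)
        rw [← h4, ← h5]; exact h3
    _ = ENNReal.ofReal (b - a) * X := by
        rw [mul_pow, ← ENNReal.rpow_natCast (X ^ (1/(2:ℝ))), ← ENNReal.rpow_natCast
          ((ENNReal.ofReal (b-a)) ^ (1/(2:ℝ))), ← ENNReal.rpow_mul, ← ENNReal.rpow_mul]
        norm_num [mul_comm]


variable {d : ℕ}

lemma upd_isometry (j : Fin d) (y : Pt d) : Isometry (fun t : ℝ => upd y j t) := by
  refine Isometry.of_dist_eq fun s t => ?_
  rw [EuclideanSpace.dist_eq]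
  rw [Finset.sum_eq_single j]
  · simp [upd, Real.sqrt_sq_eq_abs, Real.dist_eq]
  · intro i _ hij
    simp [upd, Function.update_of_ne hij]
  · simp

lemma upd_injective (j : Fin d) (y : Pt d) : Function.Injective (fun t : ℝ => upd y j t) := by
  intro s t h
  have := congrArg (fun x : Pt d => x j) h
  simpa [upd] using this

lemma upd_measurableEmbedding (j : Fin d) (y : Pt d) :
    MeasurableEmbedding (fun t : ℝ => upd y j t) :=
  ((upd_isometry j y).isClosedEmbedding).measurableEmbedding

lemma upd_map_volume (j : Fin d) (y : Pt d) :
    Measure.map (fun t : ℝ => upd y j t) volume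
      = μH[1].restrict (Set.range (fun t : ℝ => upd y j t)) := by
  have hemb := upd_measurableEmbedding j y
  have hiso := upd_isometry j y
  have him : ∀ s : Set ℝ, μH[1] ((fun t : ℝ => upd y j t) '' s) = volume s := by
    intro s
    rw [hiso.hausdorffMeasure_image (Or.inl zero_le_one), hausdorffMeasure_real]
  refine Measure.ext fun T hT => ?_
  rw [hemb.map_apply, Measure.restrict_apply hT, ← him,
    Set.image_preimage_eq_inter_range]

lemma upd_lintegral (j : Fin d) (y : Pt d) (s : Set ℝ) (hs : MeasurableSet s)
    (F : Pt d → ℝ≥0∞) (hF : Measurable F) :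
    ∫⁻ x in (fun t : ℝ => upd y j t) '' s, F x ∂μH[1] = ∫⁻ t in s, F (upd y j t) := by
  have hemb := upd_measurableEmbedding j y
  have h1 : μH[1].restrict ((fun t : ℝ => upd y j t) '' s)
      = (μH[1].restrict (Set.range (fun t : ℝ => upd y j t))).restrict
          ((fun t : ℝ => upd y j t) '' s) := by
    rw [Measure.restrict_restrict (hemb.measurableSet_image.2 hs)]
    congr 1
    rw [Set.inter_eq_left.2 (Set.image_subset_range _ _)]
  rw [h1, ← upd_map_volume, hemb.restrict_map,
    Set.preimage_image_eq _ hemb.injective, hemb.lintegral_map]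


variable {d : ℕ}

lemma opnorm_sq_le (L : Pt d →L[ℝ] ℝ) :
    ‖L‖ ^ 2 ≤ ∑ j : Fin d, (L (EuclideanSpace.single j 1)) ^ 2 := by
  set v : Pt d := WithLp.toLp 2 (fun i => L (EuclideanSpace.single i 1)) with hv
  have hLx : ∀ x : Pt d, L x = ∑ i : Fin d, x i * v i := by
    intro x
    have hx : x = ∑ i : Fin d, x i • EuclideanSpace.single i 1 := by
      ext m
      have : (∑ i : Fin d, x i • EuclideanSpace.single i 1) m
          = ∑ i : Fin d, (x i • (EuclideanSpace.single i (1:ℝ) : Pt d)) m := by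
        rw [WithLp.ofLp_sum, Finset.sum_apply]
      rw [this, Finset.sum_eq_single m]
      · simp [EuclideanSpace.single_apply]
      · intro i _ him; simp [EuclideanSpace.single_apply, Ne.symm him]
      · simp
    conv_lhs => rw [hx]
    rw [map_sum]
    simp [hv, mul_comm]
  have hnorm : ‖L‖ ≤ ‖v‖ := by
    refine L.opNorm_le_bound (norm_nonneg v) fun x => ?_
    rw [hLx x]
    have : (∑ i : Fin d, x i * v i) = inner ℝ x v := by
      simp [PiLp.inner_apply, RCLike.inner_apply, mul_comm]
    rw [Real.norm_eq_abs, this]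
    exact (abs_real_inner_le_norm x v).trans (by rw [mul_comm])
  have h2 : ‖v‖ ^ 2 = ∑ j : Fin d, (v j) ^ 2 := by
    rw [EuclideanSpace.norm_eq]
    rw [Real.sq_sqrt (by positivity)]
    simp [Real.norm_eq_abs, sq_abs]
  calc ‖L‖ ^ 2 ≤ ‖v‖ ^ 2 := by
        have := norm_nonneg L
        nlinarith [hnorm]
    _ = _ := h2


variable {d : ℕ}

lemma null_linear (f : Pt d →L[ℝ] ℝ) (hf : f ≠ 0) (c : ℝ) :
    volume {x : Pt d | f x = c} = 0 := by
  obtain ⟨x₀, hx₀⟩ : ∃ x₀ : Pt d, f x₀ = c := by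
    obtain ⟨z, hz⟩ : ∃ z : Pt d, f z ≠ 0 := by
      by_contra hc
      push_neg at hc
      exact hf (ContinuousLinearMap.ext fun z => by simp [hc z])
    exact ⟨(c / f z) • z, by simp [hz, div_mul_cancel₀ _ hz]⟩
  have hset : {x : Pt d | f x = c} = (fun y : Pt d => y + x₀) '' ((LinearMap.ker (f : Pt d →ₗ[ℝ] ℝ) : Submodule ℝ (Pt d)) : Set (Pt d)) := by
    ext x
    simp only [Set.mem_image, SetLike.mem_coe, LinearMap.mem_ker, Set.mem_setOf_eq]
    constructor
    · intro hx
      exact ⟨x - x₀, by simp [map_sub, hx, hx₀], by abel⟩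
    · rintro ⟨y, hy, rfl⟩
      simp only [map_add]
      have hy' : f y = 0 := hy
      rw [hy', hx₀, zero_add]
  have hker : volume ((LinearMap.ker (f : Pt d →ₗ[ℝ] ℝ) : Submodule ℝ (Pt d)) : Set (Pt d)) = 0 := by
    apply Measure.addHaar_submodule
    intro htop
    obtain ⟨z, hz⟩ : ∃ z : Pt d, f z ≠ 0 := by
      by_contra hc
      push_neg at hc
      exact hf (ContinuousLinearMap.ext fun z => by simp [hc z])
    have hz' : z ∈ LinearMap.ker (f : Pt d →ₗ[ℝ] ℝ) := by rw [htop]; trivial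
    exact hz hz'
  have himg : (fun y : Pt d => y + x₀) '' ((LinearMap.ker (f : Pt d →ₗ[ℝ] ℝ) : Submodule ℝ (Pt d)) : Set (Pt d))
      = (fun x : Pt d => x + (-x₀)) ⁻¹' ((LinearMap.ker (f : Pt d →ₗ[ℝ] ℝ) : Submodule ℝ (Pt d)) : Set (Pt d)) := by
    ext x
    simp only [Set.mem_image, Set.mem_preimage]
    constructor
    · rintro ⟨y, hy, rfl⟩; simpa using hy
    · intro hx; exact ⟨x + (-x₀), hx, by abel⟩
  rw [hset, himg, measure_preimage_add_right]
  exact hker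


/-- The open simplex inside the cube `C_k`. -/
def good (d : ℕ) (ε : ℝ) (k : Fin d → ℤ) (σ : Equiv.Perm (Fin d)) : Set (Pt d) :=
  {x | (∀ i, x i ∈ Set.Ioo (ε * k i) (ε * (k i + 1))) ∧
    ∀ a b : Fin d, a < b → x (σ a) - ε * k (σ a) < x (σ b) - ε * k (σ b)}

variable {d : ℕ} {ε : ℝ}

lemma continuous_eval (i : Fin d) : Continuous (fun x : Pt d => x i) :=
  (EuclideanSpace.proj (𝕜 := ℝ) i).continuous

lemma good_open (k : Fin d → ℤ) (σ : Equiv.Perm (Fin d)) : IsOpen (good d ε k σ) := by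
  have h1 : good d ε k σ = (⋂ i : Fin d, {x : Pt d | x i ∈ Set.Ioo (ε * k i) (ε * (k i + 1))}) ∩
      ⋂ (a : Fin d) (b : Fin d) (_ : a < b),
        {x : Pt d | x (σ a) - ε * k (σ a) < x (σ b) - ε * k (σ b)} := by
    ext x
    simp only [good, Set.mem_setOf_eq, Set.mem_inter_iff, Set.mem_iInter]
  rw [h1]
  refine IsOpen.inter (isOpen_iInter_of_finite fun i => ?_)
    (isOpen_iInter_of_finite fun a => isOpen_iInter_of_finite fun b =>
      isOpen_iInter_of_finite fun _ => ?_)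
  · exact IsOpen.preimage (continuous_eval i) isOpen_Ioo
  · exact isOpen_lt (by fun_prop) (by fun_prop)

lemma good_subset_simplex (k : Fin d → ℤ) (σ : Equiv.Perm (Fin d)) :
    good d ε k σ ⊆ simplexS d ε k σ := by
  rintro x ⟨h1, h2⟩
  refine ⟨fun i => Set.Ioo_subset_Icc_self (h1 i), fun a b hab => ?_⟩
  rcases eq_or_lt_of_le hab with rfl | h
  · exact le_rfl
  · exact (h2 a b h).le

lemma good_cover (hε : 0 < ε) (x : Pt d)
    (hx1 : ∀ (i : Fin d) (n : ℤ), x i ≠ ε * n)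
    (hx2 : ∀ (i i' : Fin d), i ≠ i' → ∀ n : ℤ, x i - x i' ≠ ε * n) :
    ∃ (k : Fin d → ℤ) (σ : Equiv.Perm (Fin d)), x ∈ good d ε k σ := by
  set k : Fin d → ℤ := fun i => ⌊x i / ε⌋ with hk
  set f : Fin d → ℝ := fun i => x i - ε * k i with hf
  have hmem : ∀ i, x i ∈ Set.Ioo (ε * k i) (ε * (k i + 1)) := by
    intro i
    constructor
    · have hle : ε * k i ≤ x i := by
        have h0 : (k i : ℝ) ≤ x i / ε := Int.floor_le (x i / ε)
        calc ε * (k i : ℝ) ≤ ε * (x i / ε) := by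
              exact mul_le_mul_of_nonneg_left h0 hε.le
          _ = x i := by field_simp
      exact lt_of_le_of_ne hle (Ne.symm (hx1 i (k i)))
    · have h0 : x i / ε < (k i : ℝ) + 1 := Int.lt_floor_add_one (x i / ε)
      calc x i = ε * (x i / ε) := by field_simp
        _ < ε * ((k i : ℝ) + 1) := by exact (mul_lt_mul_iff_right₀ hε).mpr h0
  have hinj : Function.Injective f := by
    intro i i' h
    by_contra hne
    exact hx2 i i' hne (k i - k i') (by push_cast; simp only [hf] at h; linarith)
  refine ⟨k, Tuple.sort f, hmem, fun a b hab => ?_⟩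
  have hmono : StrictMono (f ∘ Tuple.sort f) :=
    (Tuple.monotone_sort f).strictMono_of_injective (hinj.comp (Equiv.injective _))
  exact hmono hab

lemma good_disj (hε : 0 < ε) (k : Fin d → ℤ) {σ σ' : Equiv.Perm (Fin d)} (h : σ ≠ σ') :
    Disjoint (good d ε k σ) (good d ε k σ') := by
  rw [Set.disjoint_left]
  rintro x ⟨h1, h2⟩ ⟨h1', h2'⟩
  set f : Fin d → ℝ := fun i => x i - ε * k i with hf
  have hm : StrictMono (f ∘ σ) := fun a b hab => h2 a b hab
  have hm' : StrictMono (f ∘ σ') := fun a b hab => h2' a b hab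
  have hr : Set.range (f ∘ σ) = Set.range (f ∘ σ') := by
    rw [Set.range_comp, Set.range_comp, Equiv.range_eq_univ, Equiv.range_eq_univ]
  have := (StrictMono.range_inj hm hm').1 hr
  have hfinj : Function.Injective f := by
    intro a b hab
    have h3 : (f ∘ σ) (σ.symm a) = (f ∘ σ) (σ.symm b) := by
      simpa [Function.comp_apply] using hab
    exact σ.symm.injective (hm.injective h3)
  exact h (Equiv.ext fun a => hfinj (congrFun this a))

lemma good_translate (k : Fin d → ℤ) (σ : Equiv.Perm (Fin d)) :
    good d ε k σ = (fun x : Pt d => x + (-(vert d ε k))) ⁻¹' (good d ε 0 σ) := by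
  ext x
  have hco : ∀ i, (x + (-(vert d ε k))) i = x i - ε * k i := by
    intro i; simp [vert, sub_eq_add_neg]
  simp only [good, Set.mem_preimage, Set.mem_setOf_eq, hco]
  constructor
  · rintro ⟨h1, h2⟩
    refine ⟨fun i => ?_, fun a b hab => by simpa using h2 a b hab⟩
    have := h1 i
    simp only [Set.mem_Ioo, Pi.zero_apply, Int.cast_zero] at this ⊢
    push_cast at this ⊢
    constructor <;> [linarith [this.1]; linarith [this.2]]
  · rintro ⟨h1, h2⟩
    refine ⟨fun i => ?_, fun a b hab => by simpa using h2 a b hab⟩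
    have := h1 i
    simp only [Set.mem_Ioo, Pi.zero_apply, Int.cast_zero] at this ⊢
    push_cast at this ⊢
    constructor <;> [linarith [this.1]; linarith [this.2]]

lemma volume_good_translate (k : Fin d → ℤ) (σ : Equiv.Perm (Fin d)) :
    volume (good d ε k σ) = volume (good d ε 0 σ) := by
  rw [good_translate, measure_preimage_add_right]

lemma mem_good_zero (σ : Equiv.Perm (Fin d)) (x : Pt d) :
    x ∈ good d ε 0 σ ↔ ((∀ i, x i ∈ Set.Ioo (0:ℝ) ε) ∧
      ∀ a b : Fin d, a < b → x (σ a) < x (σ b)) := by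
  simp only [good, Set.mem_setOf_eq, Pi.zero_apply, Int.cast_zero, mul_zero, sub_zero, zero_add,
    mul_one]

lemma volume_good_perm (σ : Equiv.Perm (Fin d)) :
    volume (good d ε 0 σ) = volume (good d ε 0 1) := by
  set T := LinearIsometryEquiv.piLpCongrLeft 2 ℝ ℝ (σ : Fin d ≃ Fin d) with hT
  have hTx : ∀ (x : Pt d) (i : Fin d), T x i = x (σ.symm i) := by
    intro x i
    rw [hT, LinearIsometryEquiv.piLpCongrLeft_apply]
    rfl
  have hset : good d ε 0 1 = T ⁻¹' (good d ε 0 σ) := by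
    ext x
    rw [Set.mem_preimage, mem_good_zero, mem_good_zero]
    have hTx' : ∀ a : Fin d, T x (σ a) = x a := fun a => by
      rw [hTx, Equiv.symm_apply_apply]
    simp only [Equiv.Perm.one_apply]
    constructor
    · rintro ⟨h1, h2⟩
      refine ⟨fun i => by rw [hTx]; exact h1 _, fun a b hab => ?_⟩
      rw [hTx' a, hTx' b]; exact h2 a b hab
    · rintro ⟨h1, h2⟩
      refine ⟨fun i => ?_, fun a b hab => ?_⟩
      · have := h1 (σ i); rwa [hTx' i] at this
      · have := h2 a b hab; rwa [hTx' a, hTx' b] at this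
  rw [hset]
  exact ((T.measurePreserving).measure_preimage
    ((good_open _ _).measurableSet.nullMeasurableSet)).symm

lemma factorial_volume_good (hε : 0 < ε) :
    (d.factorial : ℝ≥0∞) * volume (good d ε 0 1) ≤ ENNReal.ofReal ε ^ d := by
  have hdisj : Pairwise (Function.onFun Disjoint (fun σ : Equiv.Perm (Fin d) => good d ε 0 σ)) :=
    fun σ σ' h => good_disj hε 0 h
  have hmeas : ∀ σ : Equiv.Perm (Fin d), MeasurableSet (good d ε 0 σ) :=
    fun σ => (good_open _ _).measurableSet
  have hsum : ∑' σ : Equiv.Perm (Fin d), volume (good d ε 0 σ)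
      = volume (⋃ σ, good d ε 0 σ) := (measure_iUnion hdisj hmeas).symm
  have hEq : ∑' σ : Equiv.Perm (Fin d), volume (good d ε 0 σ)
      = (d.factorial : ℝ≥0∞) * volume (good d ε 0 1) := by
    rw [tsum_fintype]
    rw [Finset.sum_congr rfl (fun σ _ => volume_good_perm σ)]
    rw [Finset.sum_const, Finset.card_univ, Fintype.card_perm, Fintype.card_fin,
      nsmul_eq_mul]
  have hcube : volume {x : Pt d | ∀ i, x i ∈ Set.Ioo (0:ℝ) ε} = ENNReal.ofReal ε ^ d := by
    have he := EuclideanSpace.volume_preserving_symm_measurableEquiv_toLp (Fin d)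
    have hpre : {x : Pt d | ∀ i, x i ∈ Set.Ioo (0:ℝ) ε}
        = (MeasurableEquiv.toLp 2 (Fin d → ℝ)).symm ⁻¹' (Set.univ.pi fun _ => Set.Ioo (0:ℝ) ε) := by
      ext x
      simp only [Set.mem_setOf_eq, Set.mem_preimage, Set.mem_univ_pi]
      rfl
    rw [hpre, he.measure_preimage ((MeasurableSet.univ_pi
      (fun _ => measurableSet_Ioo)).nullMeasurableSet)]
    rw [volume_pi_pi]
    simp [Real.volume_Ioo]
  have hsub : (⋃ σ, good d ε 0 σ) ⊆ {x : Pt d | ∀ i, x i ∈ Set.Ioo (0:ℝ) ε} := by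
    rintro x hx
    obtain ⟨σ, h1, _⟩ := Set.mem_iUnion.mp hx
    intro i
    have := h1 i
    simpa using this
  calc (d.factorial : ℝ≥0∞) * volume (good d ε 0 1)
      = volume (⋃ σ, good d ε 0 σ) := by rw [← hEq, hsum]
    _ ≤ volume {x : Pt d | ∀ i, x i ∈ Set.Ioo (0:ℝ) ε} := measure_mono hsub
    _ = ENNReal.ofReal ε ^ d := hcube


/-- Integral of `g²` over an open edge, in the line parametrization. -/
noncomputable def edgeF (d : ℕ) (ε : ℝ) (g : Pt d → ℝ) (j : Fin d) (v : Fin d → ℤ) : ℝ≥0∞ :=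
  ∫⁻ t in Set.Ioo (ε * v j) (ε * (v j + 1)), ENNReal.ofReal (g (upd (vert d ε v) j t) ^ 2)

/-- The base vertex of the `j`-edge of the simplex `S_{k,σ}`. -/
def Kb (d : ℕ) (k : Fin d → ℤ) (σ : Equiv.Perm (Fin d)) (j : Fin d) : Fin d → ℤ :=
  fun i => k i + (if σ.symm j < σ.symm i then 1 else 0)

variable {d : ℕ} {ε : ℝ}

lemma vert_mem_simplexS (hε : 0 < ε) (k : Fin d → ℤ) (σ : Equiv.Perm (Fin d)) (δ : Fin d → ℤ)
    (hδ : ∀ i, δ i = 0 ∨ δ i = 1) (hmono : ∀ a b : Fin d, a ≤ b → δ (σ a) ≤ δ (σ b)) :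
    vert d ε (fun i => k i + δ i) ∈ simplexS d ε k σ := by
  constructor
  · intro i
    have : vert d ε (fun i => k i + δ i) i = ε * ((k i : ℝ) + (δ i : ℝ)) := by
      show ε * ((k i + δ i : ℤ) : ℝ) = _
      push_cast; ring
    rw [this]
    rcases hδ i with h | h <;> rw [h] <;> push_cast <;>
      constructor <;> nlinarith [hε.le]
  · intro a b hab
    have hc : ∀ m : Fin d, vert d ε (fun i => k i + δ i) (σ m) - ε * (k (σ m) : ℝ)
        = ε * (δ (σ m) : ℝ) := by
      intro m; simp only [vert]; push_cast; ring
    rw [hc a, hc b]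
    have := hmono a b hab
    have : (δ (σ a) : ℝ) ≤ (δ (σ b) : ℝ) := by exact_mod_cast this
    nlinarith [hε.le]

lemma Kb_mem (hε : 0 < ε) (k : Fin d → ℤ) (σ : Equiv.Perm (Fin d)) (j : Fin d) :
    vert d ε (Kb d k σ j) ∈ simplexS d ε k σ := by
  have : Kb d k σ j = fun i => k i + (if σ.symm j < σ.symm i then 1 else 0) := rfl
  rw [this]
  exact vert_mem_simplexS hε k σ _ (fun i => by split_ifs <;> simp)
    (fun a b hab => by
      simp only [Equiv.symm_apply_apply]
      split_ifs with h1 h2 h2 <;> omega)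

/-- The top vertex. -/
def Kt (d : ℕ) (k : Fin d → ℤ) (σ : Equiv.Perm (Fin d)) (j : Fin d) : Fin d → ℤ :=
  fun i => k i + (if σ.symm j ≤ σ.symm i then 1 else 0)

lemma Kt_mem (hε : 0 < ε) (k : Fin d → ℤ) (σ : Equiv.Perm (Fin d)) (j : Fin d) :
    vert d ε (Kt d k σ j) ∈ simplexS d ε k σ := by
  have : Kt d k σ j = fun i => k i + (if σ.symm j ≤ σ.symm i then 1 else 0) := rfl
  rw [this]
  exact vert_mem_simplexS hε k σ _ (fun i => by split_ifs <;> simp)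
    (fun a b hab => by
      simp only [Equiv.symm_apply_apply]
      split_ifs with h1 h2 h2 <;> omega)

lemma Kb_j (k : Fin d → ℤ) (σ : Equiv.Perm (Fin d)) (j : Fin d) : Kb d k σ j j = k j := by
  simp [Kb]

lemma Kt_j (k : Fin d → ℤ) (σ : Equiv.Perm (Fin d)) (j : Fin d) : Kt d k σ j j = k j + 1 := by
  simp [Kt]

lemma Kb_ne (k : Fin d → ℤ) (σ : Equiv.Perm (Fin d)) {j i : Fin d} (h : i ≠ j) :
    Kt d k σ j i = Kb d k σ j i := by
  have hne : σ.symm j ≠ σ.symm i := fun hc => h (σ.symm.injective hc).symm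
  simp only [Kt, Kb]
  split_ifs with h1 h2 h2 <;> first | rfl | omega

lemma key_j (hε : 0 < ε) {u g A : Pt d → ℝ} (h1 : IsGridH1 d ε u g)
    (k : Fin d → ℤ) (σ : Equiv.Perm (Fin d)) (L : Pt d →L[ℝ] ℝ) (c : ℝ)
    (hLc : ∀ x ∈ simplexS d ε k σ, A x = L x + c)
    (hAu : ∀ k' : Fin d → ℤ, A (vert d ε k') = u (vert d ε k')) (j : Fin d) :
    ENNReal.ofReal ((ε * L (EuclideanSpace.single j 1)) ^ 2) ≤
      ENNReal.ofReal ε * edgeF d ε g j (Kb d k σ j) := by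
  set y : Pt d := vert d ε (Kb d k σ j) with hy
  have hyc : ∀ i, y i = ε * ((Kb d k σ j i : ℤ) : ℝ) := fun i => rfl
  have hyex : ∀ i, i ≠ j → ∃ m : ℤ, y i = ε * m := fun i _ => ⟨Kb d k σ j i, hyc i⟩
  have hIcc1 : ε * ((k j : ℤ) : ℝ) ∈ Set.Icc (ε * ((k j : ℤ) : ℝ)) (ε * (((k j : ℤ) : ℝ) + 1)) :=
    ⟨le_rfl, by nlinarith [hε.le]⟩
  have hIcc2 : ε * (((k j : ℤ) : ℝ) + 1) ∈
      Set.Icc (ε * ((k j : ℤ) : ℝ)) (ε * (((k j : ℤ) : ℝ) + 1)) := ⟨by nlinarith [hε.le], le_rfl⟩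
  have hftc := h1.ftc j y hyex (k j) _ hIcc1 _ hIcc2
  have hupd1 : upd y j (ε * ((k j : ℤ) : ℝ)) = y := by
    have : ε * ((k j : ℤ) : ℝ) = y j := by rw [hyc j, Kb_j]
    rw [this]
    exact congrArg (WithLp.toLp 2) (Function.update_eq_self j y.ofLp)
  have hupd2 : upd y j (ε * (((k j : ℤ) : ℝ) + 1)) = vert d ε (Kt d k σ j) := by
    ext i
    by_cases hij : i = j
    · subst hij
      have : upd y i (ε * (((k i : ℤ) : ℝ) + 1)) i = ε * (((k i : ℤ) : ℝ) + 1) := by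
        simp [upd]
      rw [this]
      have : vert d ε (Kt d k σ i) i = ε * ((Kt d k σ i i : ℤ) : ℝ) := rfl
      rw [this, Kt_j]
      push_cast; ring
    · have h1' : upd y j (ε * (((k j : ℤ) : ℝ) + 1)) i = y i := by
        simp [upd, Function.update_of_ne hij]
      rw [h1', hyc i]
      have : vert d ε (Kt d k σ j) i = ε * ((Kt d k σ j i : ℤ) : ℝ) := rfl
      rw [this, Kb_ne k σ hij]
  have hdiff : u (vert d ε (Kt d k σ j)) - u y
      = ∫ r in (ε * ((k j : ℤ) : ℝ))..(ε * (((k j : ℤ) : ℝ) + 1)), g (upd y j r) := by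
    rw [hupd1, hupd2] at hftc
    exact hftc
  have haff : u (vert d ε (Kt d k σ j)) - u y = ε * L (EuclideanSpace.single j 1) := by
    rw [hy, ← hAu, ← hAu, hLc _ (Kt_mem hε k σ j), hLc _ (Kb_mem hε k σ j)]
    have hsub : vert d ε (Kt d k σ j) - vert d ε (Kb d k σ j)
        = ε • (EuclideanSpace.single j (1:ℝ)) := by
      ext i
      have hl : (vert d ε (Kt d k σ j) - vert d ε (Kb d k σ j)) i
          = ε * ((Kt d k σ j i : ℤ) : ℝ) - ε * ((Kb d k σ j i : ℤ) : ℝ) := rfl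
      have hr : (ε • (EuclideanSpace.single j (1:ℝ))) i
          = ε * (if i = j then (1:ℝ) else 0) := by
        simp [EuclideanSpace.single_apply]
      rw [hl, hr]
      by_cases hij : i = j
      · subst hij; rw [Kt_j, Kb_j]; simp; push_cast; ring
      · rw [Kb_ne k σ hij]; simp [hij]
    calc L (vert d ε (Kt d k σ j)) + c - (L (vert d ε (Kb d k σ j)) + c)
        = L (vert d ε (Kt d k σ j) - vert d ε (Kb d k σ j)) := by rw [map_sub]; ring
      _ = ε * L (EuclideanSpace.single j 1) := by rw [hsub, _root_.map_smul, smul_eq_mul]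
  have hint := h1.intInt j y hyex (k j)
  calc ENNReal.ofReal ((ε * L (EuclideanSpace.single j 1)) ^ 2)
      = ENNReal.ofReal ((u (vert d ε (Kt d k σ j)) - u y) ^ 2) := by rw [haff]
    _ ≤ ENNReal.ofReal (ε * (((k j : ℤ) : ℝ) + 1) - ε * ((k j : ℤ) : ℝ)) *
        ∫⁻ t in Set.Ioo (ε * ((k j : ℤ) : ℝ)) (ε * (((k j : ℤ) : ℝ) + 1)),
          ENNReal.ofReal (g (upd y j t) ^ 2) := by
        rw [hdiff]
        exact cs1d (by nlinarith [hε.le]) hint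
    _ = ENNReal.ofReal ε * edgeF d ε g j (Kb d k σ j) := by
        congr 1
        · congr 1; ring
        · rw [edgeF, hy]
          congr 2 <;> rw [Kb_j]

section Assembly

variable {d : ℕ} {ε : ℝ}

lemma fderiv_on_good {A : Pt d → ℝ} (k : Fin d → ℤ) (σ : Equiv.Perm (Fin d))
    (L : Pt d →L[ℝ] ℝ) (c : ℝ) (hLc : ∀ x ∈ simplexS d ε k σ, A x = L x + c)
    {x : Pt d} (hx : x ∈ good d ε k σ) : fderiv ℝ A x = L := by
  have hnhds : A =ᶠ[nhds x] fun y => L y + c :=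
    Filter.eventuallyEq_of_mem ((good_open k σ).mem_nhds hx)
      (fun y hy => hLc y (good_subset_simplex k σ hy))
  rw [hnhds.fderiv_eq]
  exact (L.hasFDerivAt.add_const c).fderiv

/-- The open edge of the grid with base vertex `v` and direction `j`. -/
def openEdge (d : ℕ) (ε : ℝ) (j : Fin d) (v : Fin d → ℤ) : Set (Pt d) :=
  (fun t : ℝ => upd (vert d ε v) j t) '' Set.Ioo (ε * v j) (ε * (v j + 1))

lemma mem_openEdge_iff {j : Fin d} {v : Fin d → ℤ} {x : Pt d} :
    x ∈ openEdge d ε j v ↔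
      (∀ i, i ≠ j → x i = ε * v i) ∧ x j ∈ Set.Ioo (ε * (v j : ℝ)) (ε * ((v j : ℝ) + 1)) := by
  constructor
  · rintro ⟨t, ht, rfl⟩
    refine ⟨fun i hij => by simp [upd, Function.update_of_ne hij]; rfl, ?_⟩
    simpa [upd] using ht
  · rintro ⟨h1, h2⟩
    refine ⟨x j, h2, ?_⟩
    ext i
    by_cases hij : i = j
    · subst hij; simp [upd]
    · simp [upd, Function.update_of_ne hij, h1 i hij]; rfl

lemma Ioo_ne_int (hε : 0 < ε) {n m : ℤ} {t : ℝ}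
    (ht : t ∈ Set.Ioo (ε * (n : ℝ)) (ε * ((n : ℝ) + 1))) : t ≠ ε * m := by
  rintro rfl
  obtain ⟨h1, h2⟩ := ht
  have hl : (n : ℝ) < m := by
    have := (mul_lt_mul_iff_right₀ hε).mp h1; exact this
  have hr : (m : ℝ) < n + 1 := (mul_lt_mul_iff_right₀ hε).mp h2
  have : n < m := by exact_mod_cast hl
  have : (m : ℝ) < (n : ℝ) + 1 := hr
  have hm : m < n + 1 := by exact_mod_cast (by push_cast; linarith : (m:ℝ) < ((n + 1 : ℤ) : ℝ))
  omega

lemma openEdge_subset_grid {j : Fin d} {v : Fin d → ℤ} :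
    openEdge d ε j v ⊆ grid d ε := by
  intro x hx
  rw [mem_openEdge_iff] at hx
  exact Set.mem_iUnion.mpr ⟨j, fun i hij => ⟨v i, hx.1 i hij⟩⟩

lemma openEdge_disjoint (hε : 0 < ε) {p q : Fin d × (Fin d → ℤ)} (hpq : p ≠ q) :
    Disjoint (openEdge d ε p.1 p.2) (openEdge d ε q.1 q.2) := by
  rw [Set.disjoint_left]
  intro x hp hq
  rw [mem_openEdge_iff] at hp hq
  obtain ⟨j, v⟩ := p
  obtain ⟨j', v'⟩ := q
  simp only at hp hq
  by_cases hjj : j = j'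
  · subst hjj
    apply hpq
    have hv : v = v' := by
      funext i
      by_cases hij : i = j
      · subst hij
        by_contra hne
        rcases lt_or_gt_of_ne hne with h | h
        · have h1 := hp.2.2
          have h2 := hq.2.1
          have : ((v i : ℝ) + 1) ≤ (v' i : ℝ) := by exact_mod_cast (by push_cast; exact_mod_cast
            (by omega : (v i + 1 : ℤ) ≤ v' i) : ((v i + 1 : ℤ) : ℝ) ≤ ((v' i : ℤ) : ℝ))
          nlinarith
        · have h1 := hq.2.2
          have h2 := hp.2.1
          have : ((v' i : ℝ) + 1) ≤ (v i : ℝ) := by exact_mod_cast (by push_cast; exact_mod_cast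
            (by omega : (v' i + 1 : ℤ) ≤ v i) : ((v' i + 1 : ℤ) : ℝ) ≤ ((v i : ℤ) : ℝ))
          nlinarith
      · have := (hp.1 i hij).symm.trans (hq.1 i hij)
        have h2 : (v i : ℝ) = v' i := mul_left_cancel₀ hε.ne' this
        exact_mod_cast h2
    rw [hv]
  · exact Ioo_ne_int hε hp.2 (hq.1 j hjj)

end Assembly

section Final

variable {d : ℕ} {ε : ℝ}

lemma edgeF_eq_hausdorff {g : Pt d → ℝ} (hg : Measurable g) (j : Fin d) (v : Fin d → ℤ) :
    edgeF d ε g j v = ∫⁻ x in openEdge d ε j v, ENNReal.ofReal (g x ^ 2) ∂μH[1] := by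
  rw [openEdge, upd_lintegral j (vert d ε v) _ measurableSet_Ioo _
    ((hg.pow_const 2).ennreal_ofReal)]
  rfl

lemma edge_sum_le (hε : 0 < ε) {g : Pt d → ℝ} (hg : Measurable g) :
    ∑' p : Fin d × (Fin d → ℤ), edgeF d ε g p.1 p.2 ≤ gridL2sq d ε g := by
  have hmeasF : ∀ p : Fin d × (Fin d → ℤ), MeasurableSet (openEdge d ε p.1 p.2) :=
    fun p => (upd_measurableEmbedding p.1 (vert d ε p.2)).measurableSet_image.2 measurableSet_Ioo
  have h1 : ∑' p : Fin d × (Fin d → ℤ), edgeF d ε g p.1 p.2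
      = ∫⁻ x in ⋃ p : Fin d × (Fin d → ℤ), openEdge d ε p.1 p.2,
          ENNReal.ofReal (g x ^ 2) ∂μH[1] := by
    rw [lintegral_iUnion hmeasF (fun p q hpq => openEdge_disjoint hε hpq)]
    exact tsum_congr fun p => edgeF_eq_hausdorff hg p.1 p.2
  rw [h1]
  have h2 : (⋃ p : Fin d × (Fin d → ℤ), openEdge d ε p.1 p.2) ⊆ grid d ε :=
    Set.iUnion_subset fun p => openEdge_subset_grid
  exact lintegral_mono_set h2

lemma Lsq_bound (hε : 0 < ε) {u g A : Pt d → ℝ} (h1 : IsGridH1 d ε u g)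
    (k : Fin d → ℤ) (σ : Equiv.Perm (Fin d)) (L : Pt d →L[ℝ] ℝ) (c : ℝ)
    (hLc : ∀ x ∈ simplexS d ε k σ, A x = L x + c)
    (hAu : ∀ k' : Fin d → ℤ, A (vert d ε k') = u (vert d ε k')) :
    ENNReal.ofReal (‖L‖ ^ 2) ≤
      (ENNReal.ofReal ε)⁻¹ * ∑ j : Fin d, edgeF d ε g j (Kb d k σ j) := by
  have ha0 : ENNReal.ofReal ε ≠ 0 := (ENNReal.ofReal_pos.mpr hε).ne'
  have hat : ENNReal.ofReal ε ≠ ⊤ := ENNReal.ofReal_ne_top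
  have hstep : ∀ j : Fin d, ENNReal.ofReal ((L (EuclideanSpace.single j 1)) ^ 2) ≤
      (ENNReal.ofReal ε)⁻¹ * edgeF d ε g j (Kb d k σ j) := by
    intro j
    set a := ENNReal.ofReal ε
    set Y := ENNReal.ofReal ((L (EuclideanSpace.single j 1)) ^ 2)
    set E := edgeF d ε g j (Kb d k σ j)
    have hkey : a * (a * Y) ≤ a * E := by
      have h2 := key_j hε h1 k σ L c hLc hAu j
      have heq : ENNReal.ofReal ((ε * L (EuclideanSpace.single j 1)) ^ 2) = a * (a * Y) := by
        rw [show (ε * L (EuclideanSpace.single j 1)) ^ 2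
          = ε * (ε * (L (EuclideanSpace.single j 1)) ^ 2) by ring]
        rw [ENNReal.ofReal_mul hε.le, ENNReal.ofReal_mul hε.le]
      rw [← heq]
      exact h2
    have h3 : a * Y ≤ E := (ENNReal.mul_le_mul_iff_right ha0 hat).mp hkey
    calc Y = a⁻¹ * (a * Y) := by rw [← mul_assoc, ENNReal.inv_mul_cancel ha0 hat, one_mul]
      _ ≤ a⁻¹ * E := mul_le_mul_right h3 _
  calc ENNReal.ofReal (‖L‖ ^ 2)
      ≤ ENNReal.ofReal (∑ j : Fin d, (L (EuclideanSpace.single j 1)) ^ 2) :=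
        ENNReal.ofReal_le_ofReal (opnorm_sq_le L)
    _ = ∑ j : Fin d, ENNReal.ofReal ((L (EuclideanSpace.single j 1)) ^ 2) :=
        ENNReal.ofReal_sum_of_nonneg (fun j _ => sq_nonneg _)
    _ ≤ ∑ j : Fin d, (ENNReal.ofReal ε)⁻¹ * edgeF d ε g j (Kb d k σ j) :=
        Finset.sum_le_sum fun j _ => hstep j
    _ = (ENNReal.ofReal ε)⁻¹ * ∑ j : Fin d, edgeF d ε g j (Kb d k σ j) := by
        rw [Finset.mul_sum]

end Final

section TheEnd

variable {d : ℕ} {ε : ℝ}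

lemma null_coord (i : Fin d) (c : ℝ) : volume {x : Pt d | x i = c} = 0 := by
  have hne : (EuclideanSpace.proj (𝕜 := ℝ) i : Pt d →L[ℝ] ℝ) ≠ 0 := by
    intro hc
    have h2 : (EuclideanSpace.proj (𝕜 := ℝ) i) (EuclideanSpace.single i (1:ℝ)) = 0 := by
      rw [hc]; rfl
    rw [show (EuclideanSpace.proj (𝕜 := ℝ) i) (EuclideanSpace.single i (1:ℝ))
      = (EuclideanSpace.single i (1:ℝ) : Pt d) i from rfl, EuclideanSpace.single_apply] at h2
    simp at h2
  exact null_linear _ hne c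

lemma null_diffc {i i' : Fin d} (hii : i ≠ i') (c : ℝ) :
    volume {x : Pt d | x i - x i' = c} = 0 := by
  set F : Pt d →L[ℝ] ℝ := EuclideanSpace.proj i - EuclideanSpace.proj i' with hF
  have happ : ∀ x : Pt d, F x = x i - x i' := fun x => rfl
  have hne : F ≠ 0 := by
    intro hc
    have h2 : F (EuclideanSpace.single i (1:ℝ)) = 0 := by rw [hc]; rfl
    rw [happ, show (EuclideanSpace.single i (1:ℝ) : Pt d) i = 1 by
        rw [EuclideanSpace.single_apply]; simp,
      show (EuclideanSpace.single i (1:ℝ) : Pt d) i' = 0 by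
        rw [EuclideanSpace.single_apply]; simp [Ne.symm hii]] at h2
    norm_num at h2
  exact null_linear F hne c

lemma compl_goods_null (hε : 0 < ε) :
    volume ((⋃ p : (Fin d → ℤ) × Equiv.Perm (Fin d), good d ε p.1 p.2)ᶜ) = 0 := by
  have hB : volume ((⋃ (i : Fin d) (n : ℤ), {x : Pt d | x i = ε * n}) ∪
      ⋃ (i : Fin d) (i' : Fin d) (_ : i ≠ i') (n : ℤ), {x : Pt d | x i - x i' = ε * n}) = 0 := by
    refine measure_union_null ?_ ?_
    · exact measure_iUnion_null fun i => measure_iUnion_null fun n => null_coord i (ε * n)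
    · exact measure_iUnion_null fun i => measure_iUnion_null fun i' =>
        measure_iUnion_null fun hii => measure_iUnion_null fun n => null_diffc hii (ε * n)
  refine measure_mono_null ?_ hB
  intro x hx
  by_contra hxB
  apply hx
  simp only [Set.mem_union, Set.mem_iUnion, Set.mem_setOf_eq, not_or, not_exists] at hxB
  obtain ⟨hx1, hx2⟩ := hxB
  obtain ⟨k, σ, hmem⟩ := good_cover hε x (fun i n => hx1 i n)
    (fun i i' hii n => hx2 i i' hii n)
  exact Set.mem_iUnion.mpr ⟨(k, σ), hmem⟩

end TheEnd

/-- estimate (39) of Lemma 4.4. -/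
theorem stmt_6 (d : ℕ) (hd : 2 ≤ d) (ε : ℝ) (hε : 0 < ε)
    (u g A : Pt d → ℝ) (h1 : IsGridH1 d ε u g) (hA : IsAffExt d ε u A) :
    (∫⁻ x, ENNReal.ofReal (‖fderiv ℝ A x‖ ^ 2)) ≤
      ENNReal.ofReal (ε ^ (d - 1)) * gridL2sq d ε g := by
  classical
  obtain ⟨hAu, hAL⟩ := hA
  set f : Pt d → ℝ≥0∞ := fun x => ENNReal.ofReal (‖fderiv ℝ A x‖ ^ 2) with hf
  set a : ℝ≥0∞ := ENNReal.ofReal ε with ha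
  have ha0 : a ≠ 0 := (ENNReal.ofReal_pos.mpr hε).ne'
  have hat : a ≠ ⊤ := ENNReal.ofReal_ne_top
  set v₀ : ℝ≥0∞ := volume (good d ε 0 1) with hv₀
  set L : (Fin d → ℤ) → Equiv.Perm (Fin d) → (Pt d →L[ℝ] ℝ) :=
    fun k σ => (hAL k σ).choose with hL
  set cc : (Fin d → ℤ) → Equiv.Perm (Fin d) → ℝ :=
    fun k σ => (hAL k σ).choose_spec.choose with hcc
  have hLc : ∀ k σ, ∀ x ∈ simplexS d ε k σ, A x = L k σ x + cc k σ :=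
    fun k σ => (hAL k σ).choose_spec.choose_spec
  set S : (Fin d → ℤ) × Equiv.Perm (Fin d) → ℝ≥0∞ :=
    fun p => ∑ j : Fin d, edgeF d ε g j (Kb d p.1 p.2 j) with hS
  set C : ℝ≥0∞ := ∑' q : Fin d × (Fin d → ℤ), edgeF d ε g q.1 q.2 with hC
  have hUmeas : MeasurableSet (⋃ p : (Fin d → ℤ) × Equiv.Perm (Fin d), good d ε p.1 p.2) :=
    MeasurableSet.iUnion fun p => (good_open p.1 p.2).measurableSet
  -- per-piece bound
  have hpiece : ∀ p : (Fin d → ℤ) × Equiv.Perm (Fin d),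
      (∫⁻ x in good d ε p.1 p.2, f x) ≤ v₀ * (a⁻¹ * S p) := by
    rintro ⟨k, σ⟩
    have hconst : (∫⁻ x in good d ε k σ, f x)
        = ENNReal.ofReal (‖L k σ‖ ^ 2) * volume (good d ε k σ) := by
      rw [setLIntegral_congr_fun (good_open k σ).measurableSet
        (fun x hx => show f x = ENNReal.ofReal (‖L k σ‖ ^ 2) by
          show ENNReal.ofReal (‖fderiv ℝ A x‖ ^ 2) = _
          rw [fderiv_on_good k σ (L k σ) (cc k σ) (hLc k σ) hx]),
        setLIntegral_const]
    rw [hconst, volume_good_translate, volume_good_perm, mul_comm]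
    exact mul_le_mul_right (Lsq_bound hε h1 k σ (L k σ) (cc k σ) (hLc k σ) hAu) _
  -- tsum computation
  have hsumS : ∑' p : (Fin d → ℤ) × Equiv.Perm (Fin d), S p = (d.factorial : ℝ≥0∞) * C := by
    have h1' : ∑' p : (Fin d → ℤ) × Equiv.Perm (Fin d), S p
        = ∑' (σ : Equiv.Perm (Fin d)) (k : Fin d → ℤ), S (k, σ) := by
      rw [ENNReal.tsum_prod']
      exact ENNReal.tsum_comm
    have h2' : ∀ σ : Equiv.Perm (Fin d), (∑' k : Fin d → ℤ, S (k, σ)) = C := by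
      intro σ
      have hswap : (∑' k : Fin d → ℤ, S (k, σ))
          = ∑ j : Fin d, ∑' k : Fin d → ℤ, edgeF d ε g j (Kb d k σ j) := by
        rw [hS]
        exact Summable.tsum_finsetSum fun j _ => ENNReal.summable
      rw [hswap]
      have hre : ∀ j : Fin d, (∑' k : Fin d → ℤ, edgeF d ε g j (Kb d k σ j))
          = ∑' v : Fin d → ℤ, edgeF d ε g j v := by
        intro j
        set χ : Fin d → ℤ := fun i => if σ.symm j < σ.symm i then 1 else 0 with hχ
        have : ∀ k : Fin d → ℤ, Kb d k σ j = (Equiv.addRight χ) k := fun k => rfl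
        calc (∑' k : Fin d → ℤ, edgeF d ε g j (Kb d k σ j))
            = ∑' k : Fin d → ℤ, edgeF d ε g j ((Equiv.addRight χ) k) := by
              exact tsum_congr fun k => by rw [this k]
          _ = ∑' v : Fin d → ℤ, edgeF d ε g j v := (Equiv.addRight χ).tsum_eq _
      rw [Finset.sum_congr rfl fun j _ => hre j, hC, ENNReal.tsum_prod', tsum_fintype]
    rw [h1']
    rw [tsum_congr h2', tsum_fintype, Finset.sum_const, Finset.card_univ, Fintype.card_perm,
      Fintype.card_fin, nsmul_eq_mul]
  -- constant comparison
  have hconst2 : v₀ * a⁻¹ * (d.factorial : ℝ≥0∞) ≤ ENNReal.ofReal (ε ^ (d - 1)) := by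
    have hfact : (d.factorial : ℝ≥0∞) * v₀ ≤ a ^ d := factorial_volume_good hε
    have h3 : v₀ * a⁻¹ * (d.factorial : ℝ≥0∞) = ((d.factorial : ℝ≥0∞) * v₀) * a⁻¹ := by ring
    rw [h3]
    calc ((d.factorial : ℝ≥0∞) * v₀) * a⁻¹ ≤ a ^ d * a⁻¹ := mul_le_mul_left hfact _
      _ = ENNReal.ofReal (ε ^ (d - 1)) := by
          rw [show d = (d - 1) + 1 by omega, pow_succ, mul_assoc,
            ENNReal.mul_inv_cancel ha0 hat, mul_one, ha, ← ENNReal.ofReal_pow hε.le,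
            show (d - 1 + 1) - 1 = d - 1 by omega]
  -- main chain
  calc (∫⁻ x, f x)
      = (∫⁻ x in (⋃ p : (Fin d → ℤ) × Equiv.Perm (Fin d), good d ε p.1 p.2), f x)
        + ∫⁻ x in (⋃ p : (Fin d → ℤ) × Equiv.Perm (Fin d), good d ε p.1 p.2)ᶜ, f x :=
        (lintegral_add_compl f hUmeas).symm
    _ = ∫⁻ x in (⋃ p : (Fin d → ℤ) × Equiv.Perm (Fin d), good d ε p.1 p.2), f x := by
        rw [setLIntegral_measure_zero _ _ (compl_goods_null hε), add_zero]
    _ ≤ ∑' p : (Fin d → ℤ) × Equiv.Perm (Fin d), ∫⁻ x in good d ε p.1 p.2, f x :=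
        lintegral_iUnion_le _ _
    _ ≤ ∑' p : (Fin d → ℤ) × Equiv.Perm (Fin d), v₀ * (a⁻¹ * S p) :=
        ENNReal.tsum_le_tsum hpiece
    _ = v₀ * a⁻¹ * ((d.factorial : ℝ≥0∞) * C) := by
        rw [ENNReal.tsum_mul_left (a := v₀)]
        rw [ENNReal.tsum_mul_left (a := a⁻¹)]
        rw [hsumS, mul_assoc]
    _ = (v₀ * a⁻¹ * (d.factorial : ℝ≥0∞)) * C := by ring
    _ ≤ ENNReal.ofReal (ε ^ (d - 1)) * C := mul_le_mul_left hconst2 _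
    _ ≤ ENNReal.ofReal (ε ^ (d - 1)) * gridL2sq d ε g :=
        mul_le_mul_right (edge_sum_le hε h1.meas_g) _
end

section
/- Let d ≥ 2. For every W^{1,1}(𝒢_1^d)-function u with edge derivative g, one has ∫_{𝒢_1^d} u² ≤ ((d−1)/4) ( ∫_{𝒢_1^d} |g| )²; that is, ‖u‖²_{L²(𝒢_1^d)} ≤ ((d−1)/4) ‖u'‖²_{L¹(𝒢_1^d)}. (This is the two-dimensional Sobolev inequality (19) on the d-dimensional grid, proved in Case 1 of the proof of Proposition 3.2.) -/
open MeasureTheory ENNReal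

namespace Stmt9

open intervalIntegral Set

variable {w h : ℝ → ℝ}

lemma ftc_global (hInt : Integrable h)
    (hftc : ∀ n : ℤ, ∀ s ∈ Icc (n:ℝ) ((n:ℝ)+1), ∀ t ∈ Icc (n:ℝ) ((n:ℝ)+1),
      w t - w s = ∫ r in s..t, h r) (s t : ℝ) :
    w t - w s = ∫ r in s..t, h r := by
  have hii : ∀ a b : ℝ, IntervalIntegrable h volume a b := fun a b =>
    hInt.intervalIntegrable
  have key : ∀ m : ℕ, ∀ n : ℤ, ∀ r ∈ Icc (n:ℝ) ((n:ℝ) + m),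
      w r - w n = ∫ x in (n:ℝ)..r, h x := by
    intro m
    induction m with
    | zero =>
      intro n r hr
      simp only [Nat.cast_zero, add_zero] at hr
      have : r = (n:ℝ) := le_antisymm hr.2 hr.1
      simp [this]
    | succ m ih =>
      intro n r hr
      rcases le_or_gt r ((n:ℝ) + m) with h1 | h1
      · exact ih n r ⟨hr.1, h1⟩
      · have hm0 : (0:ℝ) ≤ m := Nat.cast_nonneg m
        have h2 : r ∈ Icc (((n + m : ℤ)):ℝ) ((((n + m : ℤ)):ℝ) + 1) := by
          constructor
          · push_cast; linarith
          · push_cast; have := hr.2; push_cast at this; linarith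
        have e1 := hftc (n + m) _ (left_mem_Icc.2 (by linarith)) r h2
        have e2 := ih n ((n:ℝ) + m) ⟨by linarith, le_refl _⟩
        have e3 : ((n + m : ℤ) : ℝ) = (n:ℝ) + m := by push_cast; ring
        rw [e3] at e1
        have := intervalIntegral.integral_add_adjacent_intervals
          (hii (n:ℝ) ((n:ℝ)+m)) (hii ((n:ℝ)+m) r)
        calc w r - w n = (w ((n:ℝ)+m) - w n) + (w r - w ((n:ℝ)+m)) := by ring
        _ = (∫ x in (n:ℝ)..((n:ℝ)+m), h x) + ∫ x in ((n:ℝ)+m)..r, h x := by rw [e1, e2]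
        _ = ∫ x in (n:ℝ)..r, h x := this
  have main : ∀ s t : ℝ, s ≤ t → w t - w s = ∫ r in s..t, h r := by
    intro s t hst
    set n : ℤ := ⌊s⌋ with hn
    set m : ℕ := ⌈t - (n:ℝ)⌉₊ with hm
    have h1 : (n:ℝ) ≤ s := Int.floor_le s
    have h2 : t - (n:ℝ) ≤ m := Nat.le_ceil _
    have hs : s ∈ Icc (n:ℝ) ((n:ℝ) + m) := ⟨h1, by linarith⟩
    have ht : t ∈ Icc (n:ℝ) ((n:ℝ) + m) := ⟨by linarith, by linarith⟩
    have e1 := key m n t ht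
    have e2 := key m n s hs
    have e3 := intervalIntegral.integral_interval_sub_left (hii (n:ℝ) t) (hii (n:ℝ) s)
    calc w t - w s = (w t - w n) - (w s - w n) := by ring
    _ = (∫ x in (n:ℝ)..t, h x) - ∫ x in (n:ℝ)..s, h x := by rw [e1, e2]
    _ = ∫ x in s..t, h x := e3
  rcases le_total s t with hst | hst
  · exact main s t hst
  · have := main t s hst
    rw [intervalIntegral.integral_symm]
    linarith


lemma exists_small_right (hw : Measurable w) (hB : (∫⁻ x, ENNReal.ofReal |w x|) ≠ ∞)
    (a : ℝ) {ε : ℝ} (hε : 0 < ε) : ∃ r, a ≤ r ∧ |w r| ≤ ε := by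
  by_contra hc
  push_neg at hc
  have hmono : ∫⁻ x in Ici a, ENNReal.ofReal ε ≤ ∫⁻ x in Ici a, ENNReal.ofReal |w x| := by
    refine setLIntegral_mono hw.abs.ennreal_ofReal fun x hx => ?_
    exact ENNReal.ofReal_le_ofReal (hc x hx).le
  rw [setLIntegral_const, Real.volume_Ici, ENNReal.mul_top
    (by simpa using (ENNReal.ofReal_pos.2 hε).ne')] at hmono
  exact hB (top_le_iff.1 (hmono.trans (setLIntegral_le_lintegral _ _)))

lemma exists_small_left (hw : Measurable w) (hB : (∫⁻ x, ENNReal.ofReal |w x|) ≠ ∞)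
    (a : ℝ) {ε : ℝ} (hε : 0 < ε) : ∃ r, r ≤ a ∧ |w r| ≤ ε := by
  by_contra hc
  push_neg at hc
  have hmono : ∫⁻ x in Iic a, ENNReal.ofReal ε ≤ ∫⁻ x in Iic a, ENNReal.ofReal |w x| := by
    refine setLIntegral_mono hw.abs.ennreal_ofReal fun x hx => ?_
    exact ENNReal.ofReal_le_ofReal (hc x hx).le
  rw [setLIntegral_const, Real.volume_Iic, ENNReal.mul_top
    (by simpa using (ENNReal.ofReal_pos.2 hε).ne')] at hmono
  exact hB (top_le_iff.1 (hmono.trans (setLIntegral_le_lintegral _ _)))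

lemma abs_integral_bound (hInt : Integrable h) {a b : ℝ} (hab : a ≤ b) :
    |∫ r in a..b, h r| ≤ ∫ r in a..b, |h r| :=
  intervalIntegral.abs_integral_le_integral_abs hab

lemma sup_bound (hw : Measurable w) (hInt : Integrable h)
    (hftc : ∀ n : ℤ, ∀ s ∈ Icc (n:ℝ) ((n:ℝ)+1), ∀ t ∈ Icc (n:ℝ) ((n:ℝ)+1),
      w t - w s = ∫ r in s..t, h r)
    (hB : (∫⁻ x, ENNReal.ofReal |w x|) ≠ ∞) (t : ℝ) :
    ENNReal.ofReal |w t| ≤ (∫⁻ x, ENNReal.ofReal |h x|) / 2 := by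
  have habs : Integrable (fun x => |h x|) := hInt.abs
  have hIeq : ENNReal.ofReal (∫ x, |h x|) = ∫⁻ x, ENNReal.ofReal |h x| :=
    ofReal_integral_eq_lintegral_ofReal habs (Filter.Eventually.of_forall fun x => abs_nonneg _)
  set I : ℝ := ∫ x, |h x| with hI
  have hI0 : 0 ≤ I := integral_nonneg fun x => abs_nonneg _
  have hreal : 2 * |w t| ≤ I := by
    refine le_of_forall_pos_le_add fun ε hε => ?_
    obtain ⟨r, hr, hwr⟩ := exists_small_right hw hB t (half_pos hε)
    obtain ⟨s, hs, hws⟩ := exists_small_left hw hB t (half_pos hε)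
    have hst : s ≤ t := hs
    have htr : t ≤ r := hr
    have e1 : w t - w s = ∫ x in s..t, h x := by
      have := ftc_global hInt hftc s t; exact this
    have e2 : w r - w t = ∫ x in t..r, h x := ftc_global hInt hftc t r
    have b1 : |w t - w s| ≤ ∫ x in s..t, |h x| := by
      rw [e1]; exact intervalIntegral.abs_integral_le_integral_abs hst
    have b2 : |w r - w t| ≤ ∫ x in t..r, |h x| := by
      rw [e2]; exact intervalIntegral.abs_integral_le_integral_abs htr
    have e3 : (∫ x in s..t, |h x|) + ∫ x in t..r, |h x| = ∫ x in s..r, |h x| :=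
      intervalIntegral.integral_add_adjacent_intervals
        habs.intervalIntegrable habs.intervalIntegrable
    have e4 : (∫ x in s..r, |h x|) ≤ I := by
      rw [intervalIntegral.integral_of_le (hst.trans htr)]
      exact setIntegral_le_integral habs (Filter.Eventually.of_forall fun x => abs_nonneg _)
    have : 2 * w t = (w t - w s) - (w r - w t) + w s + w r := by ring
    calc 2 * |w t| = |2 * w t| := by rw [abs_mul]; simp
    _ = |(w t - w s) - (w r - w t) + w s + w r| := by rw [this]
    _ ≤ |w t - w s| + |w r - w t| + |w s| + |w r| := by
        calc |(w t - w s) - (w r - w t) + w s + w r|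
            ≤ |(w t - w s) - (w r - w t) + w s| + |w r| := abs_add_le _ _
        _ ≤ |(w t - w s) - (w r - w t)| + |w s| + |w r| := by
            gcongr; exact abs_add_le _ _
        _ ≤ |w t - w s| + |w r - w t| + |w s| + |w r| := by
            gcongr; exact abs_sub _ _
    _ ≤ I + ε := by
        have := e3 ▸ (add_le_add b1 b2)
        linarith [hws, hwr, this.trans e4]
  rw [← hIeq]
  have : |w t| ≤ I / 2 := by linarith
  calc ENNReal.ofReal |w t| ≤ ENNReal.ofReal (I / 2) := ENNReal.ofReal_le_ofReal this
  _ = ENNReal.ofReal I / 2 := by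
      rw [ENNReal.ofReal_div_of_pos (by norm_num)]; norm_num


lemma edge_bound (hInt : Integrable h)
    (hftc : ∀ n : ℤ, ∀ s ∈ Icc (n:ℝ) ((n:ℝ)+1), ∀ t ∈ Icc (n:ℝ) ((n:ℝ)+1),
      w t - w s = ∫ r in s..t, h r) (n : ℤ) :
    (∫⁻ t in Icc (n:ℝ) ((n:ℝ)+1), ENNReal.ofReal |w t|) ≤
      (ENNReal.ofReal |w n| + ENNReal.ofReal |w ((n:ℝ)+1)| +
        ∫⁻ t in Icc (n:ℝ) ((n:ℝ)+1), ENNReal.ofReal |h t|) / 2 := by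
  have habs : Integrable (fun x => |h x|) := hInt.abs
  set I : ℝ := ∫ x in ((n:ℝ))..((n:ℝ)+1), |h x| with hIdef
  have hn1 : (n:ℝ) ≤ (n:ℝ)+1 := by linarith
  have hmemn : (n:ℝ) ∈ Icc (n:ℝ) ((n:ℝ)+1) := left_mem_Icc.2 hn1
  have hmemn1 : (n:ℝ)+1 ∈ Icc (n:ℝ) ((n:ℝ)+1) := right_mem_Icc.2 hn1
  -- pointwise bound
  have hpt : ∀ t ∈ Icc (n:ℝ) ((n:ℝ)+1), |w t| ≤ (|w n| + |w ((n:ℝ)+1)| + I) / 2 := by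
    intro t ht
    have e1 : w t - w n = ∫ x in (n:ℝ)..t, h x := hftc n _ hmemn t ht
    have e2 : w ((n:ℝ)+1) - w t = ∫ x in t..((n:ℝ)+1), h x := hftc n t ht _ hmemn1
    have b1 : |w t - w n| ≤ ∫ x in (n:ℝ)..t, |h x| := by
      rw [e1]; exact intervalIntegral.abs_integral_le_integral_abs ht.1
    have b2 : |w ((n:ℝ)+1) - w t| ≤ ∫ x in t..((n:ℝ)+1), |h x| := by
      rw [e2]; exact intervalIntegral.abs_integral_le_integral_abs ht.2
    have e3 : (∫ x in (n:ℝ)..t, |h x|) + ∫ x in t..((n:ℝ)+1), |h x| = I :=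
      intervalIntegral.integral_add_adjacent_intervals
        habs.intervalIntegrable habs.intervalIntegrable
    have a1 : |w t| ≤ |w n| + |w t - w n| := by
      have := abs_add_le (w n) (w t - w n); simpa using this
    have a2 : |w t| ≤ |w ((n:ℝ)+1)| + |w ((n:ℝ)+1) - w t| := by
      have := abs_sub (w ((n:ℝ)+1)) (w ((n:ℝ)+1) - w t); simp at this
      calc |w t| = |w ((n:ℝ)+1) - (w ((n:ℝ)+1) - w t)| := by ring_nf
      _ ≤ |w ((n:ℝ)+1)| + |w ((n:ℝ)+1) - w t| := abs_sub _ _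
    linarith
  -- the real edge integral of |h| equals the lintegral
  have hIeq : ENNReal.ofReal I = ∫⁻ t in Icc (n:ℝ) ((n:ℝ)+1), ENNReal.ofReal |h t| := by
    rw [hIdef, intervalIntegral.integral_of_le hn1, ← integral_Icc_eq_integral_Ioc]
    exact ofReal_integral_eq_lintegral_ofReal habs.integrableOn
      (Filter.Eventually.of_forall fun x => abs_nonneg _)
  have hI0 : 0 ≤ I := by
    rw [hIdef, intervalIntegral.integral_of_le hn1]
    exact setIntegral_nonneg measurableSet_Ioc fun x _ => abs_nonneg _
  calc (∫⁻ t in Icc (n:ℝ) ((n:ℝ)+1), ENNReal.ofReal |w t|)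
      ≤ ∫⁻ _ in Icc (n:ℝ) ((n:ℝ)+1), ENNReal.ofReal ((|w n| + |w ((n:ℝ)+1)| + I) / 2) :=
        setLIntegral_mono' measurableSet_Icc fun t ht =>
          ENNReal.ofReal_le_ofReal (hpt t ht)
  _ = ENNReal.ofReal ((|w n| + |w ((n:ℝ)+1)| + I) / 2) := by
      rw [setLIntegral_const, Real.volume_Icc]
      simp
  _ = (ENNReal.ofReal |w n| + ENNReal.ofReal |w ((n:ℝ)+1)| + ENNReal.ofReal I) / 2 := by
      rw [ENNReal.ofReal_div_of_pos (by norm_num), ENNReal.ofReal_add (by positivity) hI0,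
        ENNReal.ofReal_add (abs_nonneg _) (abs_nonneg _)]
      norm_num
  _ ≤ _ := by rw [hIeq]

lemma l1_bound (hw : Measurable w) (hh : Measurable h) (hInt : Integrable h)
    (hftc : ∀ n : ℤ, ∀ s ∈ Icc (n:ℝ) ((n:ℝ)+1), ∀ t ∈ Icc (n:ℝ) ((n:ℝ)+1),
      w t - w s = ∫ r in s..t, h r) :
    (∫⁻ x, ENNReal.ofReal |w x|) ≤
      (∑' n : ℤ, ENNReal.ofReal |w n|) + (∫⁻ x, ENNReal.ofReal |h x|) / 2 := by
  have hdisj : Pairwise (Function.onFun Disjoint fun n : ℤ => Ico (n:ℝ) ((n:ℝ)+1)) := by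
    intro m n hmn
    refine Set.disjoint_left.2 fun x hx1 hx2 => hmn ?_
    have h1 : (⌊x⌋ : ℤ) = m := Int.floor_eq_iff.2 ⟨hx1.1, by exact_mod_cast hx1.2⟩
    have h2 : (⌊x⌋ : ℤ) = n := Int.floor_eq_iff.2 ⟨hx2.1, by exact_mod_cast hx2.2⟩
    rw [← h1, h2]
  have hunion : ⋃ n : ℤ, Ico (n:ℝ) ((n:ℝ)+1) = univ := by
    simpa using iUnion_Ico_intCast (α := ℝ)
  have hdecomp : ∀ (F : ℝ → ℝ≥0∞), Measurable F →
      (∫⁻ x, F x) = ∑' n : ℤ, ∫⁻ x in Ico (n:ℝ) ((n:ℝ)+1), F x := by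
    intro F hF
    rw [← lintegral_iUnion (fun n => measurableSet_Ico) hdisj F, hunion]
    simp
  have hW := hdecomp _ hw.abs.ennreal_ofReal
  have hH := hdecomp _ hh.abs.ennreal_ofReal
  have hIcoIcc : ∀ (F : ℝ → ℝ≥0∞) (n : ℤ),
      (∫⁻ x in Ico (n:ℝ) ((n:ℝ)+1), F x) = ∫⁻ x in Icc (n:ℝ) ((n:ℝ)+1), F x := by
    intro F n
    rw [Measure.restrict_congr_set Ico_ae_eq_Icc]
  calc (∫⁻ x, ENNReal.ofReal |w x|)
      = ∑' n : ℤ, ∫⁻ x in Icc (n:ℝ) ((n:ℝ)+1), ENNReal.ofReal |w x| := by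
        rw [hW]; exact tsum_congr fun n => hIcoIcc _ n
  _ ≤ ∑' n : ℤ, (ENNReal.ofReal |w n| + ENNReal.ofReal |w ((n:ℝ)+1)| +
        ∫⁻ t in Icc (n:ℝ) ((n:ℝ)+1), ENNReal.ofReal |h t|) / 2 :=
        ENNReal.tsum_le_tsum fun n => edge_bound hInt hftc n
  _ = ((∑' n : ℤ, ENNReal.ofReal |w n|) + (∑' n : ℤ, ENNReal.ofReal |w ((n:ℝ)+1)|) +
        ∑' n : ℤ, ∫⁻ t in Icc (n:ℝ) ((n:ℝ)+1), ENNReal.ofReal |h t|) / 2 := by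
      simp only [div_eq_mul_inv]
      rw [ENNReal.tsum_mul_right, ENNReal.tsum_add, ENNReal.tsum_add]
  _ = ((∑' n : ℤ, ENNReal.ofReal |w n|) + (∑' n : ℤ, ENNReal.ofReal |w n|) +
        ∫⁻ x, ENNReal.ofReal |h x|) / 2 := by
      have hshift : (∑' n : ℤ, ENNReal.ofReal |w ((n:ℝ)+1)|) = ∑' n : ℤ, ENNReal.ofReal |w (n:ℝ)| := by
        have heq := (Equiv.addRight (1:ℤ)).tsum_eq (fun n : ℤ => ENNReal.ofReal |w (n:ℝ)|)
        rw [← heq]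
        refine tsum_congr fun n => ?_
        simp only [Equiv.coe_addRight]
        congr 2
        push_cast
        ring
      have hT : (∑' n : ℤ, ∫⁻ t in Icc (n:ℝ) ((n:ℝ)+1), ENNReal.ofReal |h t|)
          = ∫⁻ x, ENNReal.ofReal |h x| := by
        rw [hH]; exact (tsum_congr fun n => (hIcoIcc _ n)).symm
      rw [hshift, hT]
  _ = (∑' n : ℤ, ENNReal.ofReal |w n|) + (∫⁻ x, ENNReal.ofReal |h x|) / 2 := by
      set S := ∑' n : ℤ, ENNReal.ofReal |w n|
      set A := ∫⁻ x, ENNReal.ofReal |h x|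
      rw [ENNReal.add_div, ENNReal.add_div]
      congr 1
      rw [ENNReal.div_add_div_same, div_eq_mul_inv (S+S), ← two_mul, mul_comm (2:ℝ≥0∞) S,
        mul_assoc, ENNReal.mul_inv_cancel two_ne_zero ENNReal.ofNat_ne_top, mul_one]


variable {d : ℕ}

/-- The line through `y` in direction `j`. -/
def lineThru (y : Pt d) (j : Fin d) : Set (Pt d) := {x | ∀ i, i ≠ j → x i = y i}

lemma isometry_upd (y : Pt d) (j : Fin d) : Isometry (fun t : ℝ => upd y j t) := by
  refine Isometry.of_dist_eq fun s t => ?_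
  rw [EuclideanSpace.dist_eq]
  have hcoord : ∀ i : Fin d, dist (upd y j s i) (upd y j t i) ^ 2
      = if i = j then dist s t ^ 2 else 0 := by
    intro i
    by_cases hi : i = j
    · subst hi; simp [upd]
    · simp [upd, Function.update_of_ne hi, hi]
  rw [Finset.sum_congr rfl fun i _ => hcoord i]
  rw [Finset.sum_ite_eq' Finset.univ j (fun _ => dist s t ^ 2)]
  simp [Real.sqrt_sq dist_nonneg]

lemma range_upd (y : Pt d) (j : Fin d) : Set.range (fun t : ℝ => upd y j t) = lineThru y j := by
  ext x
  constructor
  · rintro ⟨t, rfl⟩ i hi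
    simp [upd, Function.update_of_ne hi]
  · intro hx
    refine ⟨x j, PiLp.ext fun i => ?_⟩
    by_cases hi : i = j
    · subst hi; simp [upd]
    · simp [upd, Function.update_of_ne hi, hx i hi]

lemma injective_upd (y : Pt d) (j : Fin d) : Function.Injective (fun t : ℝ => upd y j t) :=
  (isometry_upd y j).injective

lemma measurableSet_lineThru (y : Pt d) (j : Fin d) : MeasurableSet (lineThru y j) := by
  have : lineThru y j = ⋂ i, ⋂ (_ : i ≠ j), (fun x : Pt d => x i) ⁻¹' {y i} := by
    ext x; simp [lineThru]
  rw [this]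
  refine MeasurableSet.iInter fun i => MeasurableSet.iInter fun hi => ?_
  exact ((continuous_apply i).comp (PiLp.continuous_ofLp 2 _)).measurable (measurableSet_singleton _)

lemma restrict_lineThru (y : Pt d) (j : Fin d) :
    (μH[1] : Measure (Pt d)).restrict (lineThru y j)
      = Measure.map (fun t : ℝ => upd y j t) volume := by
  ext s hs
  rw [Measure.restrict_apply hs,
    Measure.map_apply (isometry_upd y j).continuous.measurable hs]
  have h1 : s ∩ lineThru y j = (fun t : ℝ => upd y j t) '' ((fun t : ℝ => upd y j t) ⁻¹' s) := by
    rw [Set.image_preimage_eq_inter_range, range_upd]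
  rw [h1, (isometry_upd y j).hausdorffMeasure_image (Or.inl one_pos.le),
    ← MeasureTheory.hausdorffMeasure_real]

lemma lintegral_lineThru (y : Pt d) (j : Fin d) {F : Pt d → ℝ≥0∞} (hF : Measurable F) :
    ∫⁻ x in lineThru y j, F x ∂μH[1] = ∫⁻ t, F (upd y j t) := by
  rw [restrict_lineThru, lintegral_map hF (isometry_upd y j).continuous.measurable]


end Stmt9
namespace Stmt9

open Set intervalIntegral

variable {d : ℕ}

lemma lineThru_subset_grid {y : Pt d} {j : Fin d}
    (hy : ∀ i, i ≠ j → ∃ m : ℤ, y i = (m : ℝ)) : lineThru y j ⊆ grid d 1 := by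
  intro x hx
  refine Set.mem_iUnion.2 ⟨j, fun i hi => ?_⟩
  obtain ⟨m, hm⟩ := hy i hi
  exact ⟨m, by rw [hx i hi, hm]; ring⟩

lemma subsingleton_inter {y y' : Pt d} {j j' : Fin d} (hne : j ≠ j') :
    (lineThru y j ∩ lineThru y' j').Subsingleton := by
  rintro x ⟨hx1, hx2⟩ z ⟨hz1, hz2⟩
  refine PiLp.ext fun i => ?_
  by_cases hij : i = j
  · subst hij
    rw [hx2 i hne, hz2 i hne]
  · rw [hx1 i hij, hz1 i hij]

lemma measure_inter_ne {y y' : Pt d} {j j' : Fin d} (hne : j ≠ j') :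
    (μH[1] : Measure (Pt d)) (lineThru y j ∩ lineThru y' j') = 0 := by
  haveI : NullSingletonClass (μH[1] : Measure (Pt d)) := MeasureTheory.Measure.noAtoms_hausdorff (Pt d) one_pos
  exact (subsingleton_inter hne).measure_zero _

lemma disjoint_parallel {y y' : Pt d} {j i : Fin d} (hij : i ≠ j)
    (hne : y i ≠ y' i) : Disjoint (lineThru y j) (lineThru y' j) := by
  refine Set.disjoint_left.2 fun x hx1 hx2 => hne ?_
  rw [← hx1 i hij, hx2 i hij]

lemma line_facts {u g : Pt d → ℝ} (h : IsGridW11 d u g)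
    (j : Fin d) (y : Pt d) (hy : ∀ i, i ≠ j → ∃ m : ℤ, y i = (m : ℝ)) :
    (∀ t : ℝ, ENNReal.ofReal |u (upd y j t)| ≤ (∫⁻ t, ENNReal.ofReal |g (upd y j t)|) / 2)
    ∧ (∫⁻ t, ENNReal.ofReal |u (upd y j t)|) ≤
        (∑' n : ℤ, ENNReal.ofReal |u (upd y j (n : ℝ))|)
          + (∫⁻ t, ENNReal.ofReal |g (upd y j t)|) / 2 := by
  classical
  have hφm : Measurable (fun t : ℝ => upd y j t) := (isometry_upd y j).continuous.measurable
  have hw : Measurable (fun t => u (upd y j t)) := h.meas_u.comp hφm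
  have hh : Measurable (fun t => g (upd y j t)) := h.meas_g.comp hφm
  have hAeq : (∫⁻ t, ENNReal.ofReal |g (upd y j t)|)
      = ∫⁻ x in lineThru y j, ENNReal.ofReal |g x| ∂μH[1] :=
    (lintegral_lineThru y j h.meas_g.abs.ennreal_ofReal).symm
  have hBeq : (∫⁻ t, ENNReal.ofReal |u (upd y j t)|)
      = ∫⁻ x in lineThru y j, ENNReal.ofReal |u x| ∂μH[1] :=
    (lintegral_lineThru y j h.meas_u.abs.ennreal_ofReal).symm
  have hgridg : (∫⁻ x in grid d 1, ENNReal.ofReal |g x| ∂μH[1]) ≠ ∞ := h.finL1g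
  have hgridu : (∫⁻ x in grid d 1, ENNReal.ofReal |u x| ∂μH[1]) ≠ ∞ := h.finL1u
  have hA : (∫⁻ t, ENNReal.ofReal |g (upd y j t)|) ≠ ∞ := by
    rw [hAeq]
    exact ((lintegral_mono_set (lineThru_subset_grid hy)).trans_lt hgridg.lt_top).ne
  have hB : (∫⁻ t, ENNReal.ofReal |u (upd y j t)|) ≠ ∞ := by
    rw [hBeq]
    exact ((lintegral_mono_set (lineThru_subset_grid hy)).trans_lt hgridu.lt_top).ne
  have hInt : Integrable (fun t => g (upd y j t)) := by
    refine ⟨hh.aestronglyMeasurable, ?_⟩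
    rw [hasFiniteIntegral_def]
    have : (∫⁻ t, ‖g (upd y j t)‖ₑ) = ∫⁻ t, ENNReal.ofReal |g (upd y j t)| := by
      congr 1; funext t; rw [Real.enorm_eq_ofReal_abs]
    rw [this]
    exact hA.lt_top
  have hftc := h.ftc j y hy
  exact ⟨fun t => sup_bound hw hInt hftc hB t, l1_bound hw hh hInt hftc⟩

lemma line_l2 {u g : Pt d → ℝ} (h : IsGridW11 d u g) (j : Fin d) (y : Pt d)
    (C : ℝ≥0∞) (hsup : ∀ t, ENNReal.ofReal |u (upd y j t)| ≤ C) :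
    ∫⁻ x in lineThru y j, ENNReal.ofReal ((u x)^2) ∂μH[1]
      ≤ C * ∫⁻ t, ENNReal.ofReal |u (upd y j t)| := by
  have hφm : Measurable (fun t : ℝ => upd y j t) := (isometry_upd y j).continuous.measurable
  rw [lintegral_lineThru y j ((h.meas_u.pow_const 2).ennreal_ofReal)]
  calc ∫⁻ t, ENNReal.ofReal ((u (upd y j t))^2)
      ≤ ∫⁻ t, C * ENNReal.ofReal |u (upd y j t)| := by
        refine lintegral_mono fun t => ?_
        rw [sq, ← abs_mul_abs_self, ENNReal.ofReal_mul (abs_nonneg _)]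
        exact mul_le_mul_left (hsup t) _
  _ = C * ∫⁻ t, ENNReal.ofReal |u (upd y j t)| :=
      lintegral_const_mul C ((h.meas_u.comp hφm).abs.ennreal_ofReal)

def LIdx (d : ℕ) := Σ j : Fin d, {k : Fin d → ℤ // k j = 0}

instance : Countable (LIdx d) := by unfold LIdx; infer_instance

end Stmt9
open Stmt9
/-- the two-dimensional Sobolev inequality (19) on the `d`-dimensional grid. -/
theorem stmt_9 (d : ℕ) (hd : 2 ≤ d) (u g : Pt d → ℝ) (h : IsGridW11 d u g) :
    gridL2sq d 1 u ≤
      ENNReal.ofReal (((d : ℝ) - 1) / 4) * (gridInt d 1 (fun x => |g x|)) ^ 2 := by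
  classical
  set M := gridInt d 1 (fun x => |g x|) with hMdef
  have hFg : Measurable fun x : Pt d => ENNReal.ofReal |g x| := h.meas_g.abs.ennreal_ofReal
  set bp : (Fin d → ℤ) → Pt d := fun k => WithLp.toLp 2 (fun i => (k i : ℝ) : Fin d → ℝ) with hbp
  set L : LIdx d → Set (Pt d) := fun p => lineThru (bp p.2.1) p.1 with hLdef
  have hbase : ∀ p : LIdx d, ∀ i, i ≠ p.1 → ∃ m : ℤ, bp p.2.1 i = (m:ℝ) :=
    fun p i _ => ⟨p.2.1 i, rfl⟩
  have hLgrid : ∀ p : LIdx d, L p ⊆ grid d 1 := fun p => lineThru_subset_grid (hbase p)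
  have hLmeas : ∀ p : LIdx d, MeasurableSet (L p) := fun p => measurableSet_lineThru _ _
  have hcover : grid d 1 ⊆ ⋃ p : LIdx d, L p := by
    intro x hx
    obtain ⟨j, hj⟩ := Set.mem_iUnion.1 hx
    set k : Fin d → ℤ := fun i => if hi : i = j then 0 else Classical.choose (hj i hi) with hk
    have hkj : k j = 0 := by simp [hk]
    refine Set.mem_iUnion.2 ⟨⟨j, ⟨k, hkj⟩⟩, fun i hi => ?_⟩
    have hsp := Classical.choose_spec (hj i hi)
    show x i = bp k i
    simp only [hbp, hk, dif_neg hi]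
    exact hsp.trans (one_mul _)
  have hdisj : Pairwise (Function.onFun (MeasureTheory.AEDisjoint (μH[1] : Measure (Pt d))) L) := by
    rintro ⟨j, k, hk⟩ ⟨j', k', hk'⟩ hne
    by_cases hjj : j = j'
    · subst hjj
      have hkk : k ≠ k' := by
        intro hE
        exact hne (by subst hE; rfl)
      obtain ⟨i, hi⟩ : ∃ i, k i ≠ k' i := Function.ne_iff.1 hkk
      have hij : i ≠ j := fun hE => hi (by rw [hE, hk, hk'])
      refine (disjoint_parallel hij ?_).aedisjoint
      intro hE
      have hE' : ((k i : ℝ)) = ((k' i : ℝ)) := hE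
      exact hi (by exact_mod_cast hE')
    · exact measure_inter_ne hjj
  have hsumA : (∑' p : LIdx d, ∫⁻ x in L p, ENNReal.ofReal |g x| ∂μH[1]) ≤ M := by
    rw [← lintegral_iUnion₀ (fun p => (hLmeas p).nullMeasurableSet) hdisj]
    exact lintegral_mono_set (Set.iUnion_subset hLgrid)
  -- per-line bound
  have hline : ∀ p : LIdx d, (∫⁻ x in L p, ENNReal.ofReal ((u x)^2) ∂μH[1])
      ≤ ((∫⁻ x in L p, ENNReal.ofReal |g x| ∂μH[1]) / 2) * (M / 2) := by
    rintro ⟨j, k, hk⟩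
    obtain ⟨i, hij⟩ : ∃ i : Fin d, i ≠ j := by
      haveI : Nontrivial (Fin d) := Fin.nontrivial_iff_two_le.2 hd
      exact exists_ne j
    set y : Pt d := bp k with hydef
    have hy : ∀ l, l ≠ j → ∃ m : ℤ, y l = (m:ℝ) := fun l _ => ⟨k l, rfl⟩
    obtain ⟨hsup, hl1⟩ := line_facts h j y hy
    set A : ℝ≥0∞ := ∫⁻ t, ENNReal.ofReal |g (upd y j t)| with hAdef
    set B : ℝ≥0∞ := ∫⁻ t, ENNReal.ofReal |u (upd y j t)| with hBdef
    have hAeq : A = ∫⁻ x in lineThru y j, ENNReal.ofReal |g x| ∂μH[1] :=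
      (lintegral_lineThru y j hFg).symm
    set v : ℤ → Pt d := fun n => upd y j (n:ℝ) with hvdef
    have hvj : ∀ n : ℤ, v n j = (n:ℝ) := fun n => by simp [hvdef, upd]
    have hv : ∀ n : ℤ, ∀ l, l ≠ i → ∃ m : ℤ, v n l = (m:ℝ) := by
      intro n l _
      by_cases hlj : l = j
      · subst hlj; exact ⟨n, hvj n⟩
      · refine ⟨k l, ?_⟩
        show upd y j (n:ℝ) l = _
        rw [upd, PiLp.toLp_apply, Function.update_of_ne hlj]
    set A' : ℤ → ℝ≥0∞ := fun n => ∫⁻ t, ENNReal.ofReal |g (upd (v n) i t)| with hA'def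
    have hvert : ∀ n : ℤ, ENNReal.ofReal |u (v n)| ≤ A' n / 2 := by
      intro n
      have := (line_facts h i (v n) (hv n)).1 (v n i)
      rwa [upd, Function.update_eq_self, WithLp.toLp_ofLp] at this
    have htrans : A + (∑' n : ℤ, A' n) ≤ M := by
      set S : ℤ → Set (Pt d) := fun n => lineThru (v n) i with hSdef
      have hSmeas : ∀ n : ℤ, MeasurableSet (S n) := fun n => measurableSet_lineThru _ _
      have hSA' : ∀ n : ℤ, A' n = ∫⁻ x in S n, ENNReal.ofReal |g x| ∂μH[1] :=
        fun n => (lintegral_lineThru (v n) i hFg).symm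
      have hSdisj : Pairwise (Function.onFun (MeasureTheory.AEDisjoint (μH[1] : Measure (Pt d))) S) := by
        intro n m hnm
        refine (disjoint_parallel (j := i) (i := j) hij.symm ?_).aedisjoint
        rw [hvj n, hvj m]
        exact fun hE => hnm (Int.cast_injective hE)
      have hLS : MeasureTheory.AEDisjoint (μH[1] : Measure (Pt d)) (lineThru y j) (⋃ n, S n) := by
        show (μH[1] : Measure (Pt d)) (lineThru y j ∩ ⋃ n, S n) = 0
        rw [Set.inter_iUnion]
        exact measure_iUnion_null fun n => measure_inter_ne hij.symm
      have hUnm : MeasureTheory.NullMeasurableSet (⋃ n, S n) (μH[1] : Measure (Pt d)) :=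
        (MeasurableSet.iUnion hSmeas).nullMeasurableSet
      calc A + (∑' n : ℤ, A' n)
          = (∫⁻ x in lineThru y j, ENNReal.ofReal |g x| ∂μH[1])
            + ∫⁻ x in ⋃ n, S n, ENNReal.ofReal |g x| ∂μH[1] := by
            rw [hAeq, lintegral_iUnion₀ (fun n => (hSmeas n).nullMeasurableSet) hSdisj]
            exact congrArg _ (tsum_congr hSA')
      _ = ∫⁻ x in lineThru y j ∪ ⋃ n, S n, ENNReal.ofReal |g x| ∂μH[1] := by
            rw [MeasureTheory.Measure.restrict_union₀ hLS hUnm, lintegral_add_measure]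
      _ ≤ M := lintegral_mono_set (Set.union_subset (lineThru_subset_grid hy)
            (Set.iUnion_subset fun n => lineThru_subset_grid (hv n)))
    have hBM : B ≤ M / 2 := by
      calc B ≤ (∑' n : ℤ, ENNReal.ofReal |u (upd y j (n:ℝ))|) + A / 2 := hl1
      _ ≤ (∑' n : ℤ, A' n / 2) + A / 2 := by
          refine add_le_add_left (ENNReal.tsum_le_tsum fun n => ?_) _
          exact hvert n
      _ = ((∑' n : ℤ, A' n) + A) / 2 := by
          rw [ENNReal.add_div]
          congr 1
          simp only [div_eq_mul_inv]
          exact ENNReal.tsum_mul_right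
      _ ≤ M / 2 := by
          refine ENNReal.div_le_div_right ?_ 2
          rw [add_comm]
          exact htrans
    calc (∫⁻ x in L ⟨j, ⟨k, hk⟩⟩, ENNReal.ofReal ((u x)^2) ∂μH[1])
        ≤ (A/2) * B := line_l2 h j y (A/2) hsup
    _ ≤ (A/2) * (M/2) := mul_le_mul_right hBM _
    _ = ((∫⁻ x in L ⟨j, ⟨k, hk⟩⟩, ENNReal.ofReal |g x| ∂μH[1])/2) * (M/2) := by
        rw [← hAeq]
  -- assemble
  have htotal : gridL2sq d 1 u
      ≤ ((∑' p : LIdx d, ∫⁻ x in L p, ENNReal.ofReal |g x| ∂μH[1]) / 2) * (M/2) := by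
    calc gridL2sq d 1 u = ∫⁻ x in grid d 1, ENNReal.ofReal ((u x)^2) ∂μH[1] := rfl
    _ ≤ ∫⁻ x in ⋃ p : LIdx d, L p, ENNReal.ofReal ((u x)^2) ∂μH[1] :=
        lintegral_mono_set hcover
    _ = ∑' p : LIdx d, ∫⁻ x in L p, ENNReal.ofReal ((u x)^2) ∂μH[1] :=
        lintegral_iUnion₀ (fun p => (hLmeas p).nullMeasurableSet) hdisj _
    _ ≤ ∑' p : LIdx d, ((∫⁻ x in L p, ENNReal.ofReal |g x| ∂μH[1]) / 2) * (M/2) :=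
        ENNReal.tsum_le_tsum hline
    _ = ((∑' p : LIdx d, ∫⁻ x in L p, ENNReal.ofReal |g x| ∂μH[1]) / 2) * (M/2) := by
        simp only [div_eq_mul_inv]
        rw [← ENNReal.tsum_mul_right, ← ENNReal.tsum_mul_right]
  have hfinal : ((∑' p : LIdx d, ∫⁻ x in L p, ENNReal.ofReal |g x| ∂μH[1]) / 2) * (M/2)
      ≤ ENNReal.ofReal (((d : ℝ) - 1) / 4) * M ^ 2 := by
    have step1 : ((∑' p : LIdx d, ∫⁻ x in L p, ENNReal.ofReal |g x| ∂μH[1]) / 2) * (M/2)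
        ≤ (M / 2) * (M / 2) :=
      mul_le_mul_left (ENNReal.div_le_div_right hsumA 2) _
    have step2 : (M / 2) * (M / 2) = (4:ℝ≥0∞)⁻¹ * M ^ 2 := by
      rw [div_eq_mul_inv, sq]
      have h22 : (2:ℝ≥0∞)⁻¹ * 2⁻¹ = (4:ℝ≥0∞)⁻¹ := by
        rw [← ENNReal.mul_inv (Or.inl two_ne_zero) (Or.inl ENNReal.ofNat_ne_top)]
        norm_num
      calc M * 2⁻¹ * (M * 2⁻¹) = (2⁻¹ * 2⁻¹) * (M * M) := by ring
      _ = (4:ℝ≥0∞)⁻¹ * (M * M) := by rw [h22]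
    have step3 : (4:ℝ≥0∞)⁻¹ ≤ ENNReal.ofReal (((d : ℝ) - 1) / 4) := by
      have h14 : ENNReal.ofReal ((1:ℝ)/4) = (4:ℝ≥0∞)⁻¹ := by
        rw [ENNReal.ofReal_div_of_pos (by norm_num)]
        norm_num
      rw [← h14]
      refine ENNReal.ofReal_le_ofReal ?_
      have : (2:ℝ) ≤ (d:ℝ) := by exact_mod_cast hd
      linarith
    calc ((∑' p : LIdx d, ∫⁻ x in L p, ENNReal.ofReal |g x| ∂μH[1]) / 2) * (M/2)
        ≤ (4:ℝ≥0∞)⁻¹ * M ^ 2 := step2 ▸ step1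
    _ ≤ ENNReal.ofReal (((d : ℝ) - 1) / 4) * M ^ 2 := mul_le_mul_left step3 _
  exact htotal.trans hfinal
end
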